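/- arXiv:2102.08668 — 4 statements merged into one kernel-verified Lean document; each statement's English description precedes it below -/
import Mathlib

section
/- Let X and G be random vectors in a finite-dimensional inner product space H, let Σ be a positive semi-definite operator on H with eigenpairs (λ_j, v_j), and for δ > 0 let Π_δ (resp. Π_δ^⊥) be the orthogonal projection onto the span of eigenvectors with λ_j ≤ δ (resp. its complement). If G ~ N(0, Σ) and E‖Π_δ X‖² ≤ δ·dim(H), then W₂²(X, G) ≤ W₂²(Π_δ^⊥ X, Π_δ^⊥ G) + 4·dim(H)·δ. -/
open MeasureTheory ProbabilityTheory
open scoped RealInnerProductSpace ENNReal NNReal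

open Real in
lemma aux_moment2 {b : ℝ} (hb : 0 < b) :
    ∫ x : ℝ, x ^ 2 * Real.exp (-b * x ^ 2) = Real.sqrt (π / b) / (2 * b) := by
  have hrp : ∀ x : ℝ, x ^ (2:ℝ) = x ^ (2:ℕ) := fun x => by
    rw [← Real.rpow_natCast x 2]; norm_num
  have hint : Integrable (fun x : ℝ => x ^ 2 * Real.exp (-b * x ^ 2)) := by
    have := integrable_rpow_mul_exp_neg_mul_sq hb (s := 2) (by norm_num)
    convert this using 2 with x
    rw [hrp]
  have hIoi : ∫ x in Set.Ioi (0:ℝ), x ^ 2 * Real.exp (-b * x ^ 2)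
      = b ^ (-(3:ℝ)/2) * (1/2) * Real.Gamma ((3:ℝ)/2) := by
    have h := integral_rpow_mul_exp_neg_mul_rpow (p := 2) (q := 2) (by norm_num) (by norm_num) hb
    rw [show (-(2+1:ℝ)/2) = -(3:ℝ)/2 by norm_num, show ((2+1:ℝ)/2) = (3:ℝ)/2 by norm_num] at h
    rw [← h]
    refine setIntegral_congr_fun measurableSet_Ioi (fun x _ => ?_)
    norm_num
  have hcomp := integral_comp_neg_Ioi (c := (0:ℝ)) (f := fun x => x ^ 2 * Real.exp (-b * x ^ 2))
  rw [neg_zero] at hcomp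
  have hneg : ∫ x in Set.Iic (0:ℝ), x ^ 2 * Real.exp (-b * x ^ 2)
      = ∫ x in Set.Ioi (0:ℝ), x ^ 2 * Real.exp (-b * x ^ 2) := by
    rw [← hcomp]
    refine setIntegral_congr_fun measurableSet_Ioi (fun x _ => ?_)
    ring_nf
  have hsplit : ∫ x : ℝ, x ^ 2 * Real.exp (-b * x ^ 2)
      = (∫ x in Set.Iic (0:ℝ), x ^ 2 * Real.exp (-b * x ^ 2))
        + ∫ x in Set.Ioi (0:ℝ), x ^ 2 * Real.exp (-b * x ^ 2) := by
    rw [← integral_add_compl (measurableSet_Iic (a := (0:ℝ))) hint]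
    congr 1
    rw [Set.compl_Iic]
  have hG : Real.Gamma ((3:ℝ)/2) = Real.sqrt π / 2 := by
    rw [show ((3:ℝ)/2) = 1/2 + 1 by norm_num, Real.Gamma_add_one (by norm_num),
      Real.Gamma_one_half_eq]
    ring
  rw [hsplit, hneg, hIoi, hG]
  have hb' : (0:ℝ) < √b := Real.sqrt_pos.mpr hb
  have h1 : b ^ (-(3:ℝ)/2) = (√b)⁻¹ * b⁻¹ := by
    rw [show (-(3:ℝ)/2) = (-(1:ℝ)/2) + (-1) by norm_num, Real.rpow_add hb,
      Real.rpow_neg_one]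
    congr 1
    rw [show (-(1:ℝ)/2) = -(1/2) by norm_num, Real.rpow_neg hb.le, Real.sqrt_eq_rpow]
  have h2 : Real.sqrt (π / b) = Real.sqrt π / √b := Real.sqrt_div pi_pos.le b
  rw [h1, h2]
  field_simp
  ring

open Real in
lemma aux_gauss_sq (v : ℝ≥0) :
    Integrable (fun x : ℝ => x ^ 2) (gaussianReal 0 v)
      ∧ ∫ x, x ^ 2 ∂(gaussianReal 0 v) = (v : ℝ) := by
  rcases eq_or_ne v 0 with rfl | hv
  · rw [gaussianReal_zero_var]
    constructor
    · refine ⟨(measurable_id.pow_const 2).aestronglyMeasurable, ?_⟩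
      simp [HasFiniteIntegral, lintegral_dirac]
    · simp
  · have hvpos : (0:ℝ) < v := by positivity
    have hb : (0:ℝ) < (2 * (v:ℝ))⁻¹ := by positivity
    set b : ℝ := (2 * (v:ℝ))⁻¹ with hbdef
    have hpdf : ∀ x : ℝ, gaussianPDFReal 0 v x = (Real.sqrt (2 * π * v))⁻¹ * Real.exp (-b * x ^ 2) := by
      intro x
      rw [gaussianPDFReal]
      congr 1
      rw [hbdef]
      field_simp
      rw [sub_zero]
    have hmeas : Measurable fun x : ℝ => (gaussianPDFReal 0 v x).toNNReal :=
      (measurable_gaussianPDFReal 0 v).real_toNNReal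
    have hgr : gaussianReal 0 v
        = volume.withDensity (fun x => ((gaussianPDFReal 0 v x).toNNReal : ℝ≥0∞)) := by
      rw [gaussianReal_of_var_ne_zero 0 hv]; rfl
    have hsmul : ∀ x : ℝ, (gaussianPDFReal 0 v x).toNNReal • (x ^ 2)
        = (Real.sqrt (2 * π * v))⁻¹ * (x ^ 2 * Real.exp (-b * x ^ 2)) := by
      intro x
      rw [NNReal.smul_def, smul_eq_mul, Real.coe_toNNReal _ (gaussianPDFReal_nonneg 0 v x), hpdf]
      ring
    have hInt : Integrable (fun x : ℝ => x ^ 2) (gaussianReal 0 v) := by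
      rw [hgr, integrable_withDensity_iff_integrable_smul hmeas]
      have : Integrable (fun x : ℝ => (Real.sqrt (2 * π * v))⁻¹ * (x ^ 2 * Real.exp (-b * x ^ 2))) := by
        refine Integrable.const_mul ?_ _
        have := integrable_rpow_mul_exp_neg_mul_sq hb (s := 2) (by norm_num)
        convert this using 2 with x
        rw [← Real.rpow_natCast x 2]; norm_num
      exact this.congr (Filter.Eventually.of_forall fun x => (hsmul x).symm)
    refine ⟨hInt, ?_⟩
    rw [hgr, integral_withDensity_eq_integral_smul hmeas]
    calc ∫ x, (gaussianPDFReal 0 v x).toNNReal • (x ^ 2)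
        = ∫ x, (Real.sqrt (2 * π * v))⁻¹ * (x ^ 2 * Real.exp (-b * x ^ 2)) :=
          integral_congr_ae (Filter.Eventually.of_forall hsmul)
      _ = (Real.sqrt (2 * π * v))⁻¹ * (Real.sqrt (π / b) / (2 * b)) := by
          rw [integral_const_mul, aux_moment2 hb]
      _ = (v : ℝ) := by
          have h2b : 2 * b = ((v:ℝ))⁻¹ := by rw [hbdef]; field_simp
          have hπb : π / b = 2 * π * v := by rw [hbdef]; field_simp
          rw [h2b, hπb]
          have hs : Real.sqrt (2 * π * v) ≠ 0 := by
            refine ne_of_gt (Real.sqrt_pos.mpr ?_)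
            positivity
          field_simp

lemma aux_lintegral_sq_gauss (v : ℝ≥0) :
    ∫⁻ x, ENNReal.ofReal (x ^ 2) ∂(gaussianReal 0 v) = (v : ℝ≥0∞) := by
  rw [← ofReal_integral_eq_lintegral_ofReal (aux_gauss_sq v).1
    (Filter.Eventually.of_forall fun x => sq_nonneg x), (aux_gauss_sq v).2,
    ENNReal.ofReal_coe_nnreal]

/-- Integrability in terms of the lintegral of `ofReal`, for nonnegative functions. -/
lemma aux_integrable_iff {α : Type*} [MeasurableSpace α] {μ : Measure α} {f : α → ℝ}
    (hf : AEStronglyMeasurable f μ) (h0 : ∀ x, 0 ≤ f x) :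
    Integrable f μ ↔ ∫⁻ x, ENNReal.ofReal (f x) ∂μ < ∞ := by
  rw [Integrable, and_iff_right hf, hasFiniteIntegral_iff_ofReal
    (Filter.Eventually.of_forall h0)]

/-- Squared 2-Wasserstein distance between two laws on a normed space,
defined as the infimum over couplings of `E‖X − Y‖²`. -/
noncomputable def W2sq {H : Type*} [NormedAddCommGroup H] [MeasurableSpace H]
    (μ ν : Measure H) : ℝ :=
  sInf { r | ∃ π : Measure (H × H), IsProbabilityMeasure π ∧
    π.map Prod.fst = μ ∧ π.map Prod.snd = ν ∧ r = ∫ p, ‖p.1 - p.2‖ ^ 2 ∂π }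

set_option maxHeartbeats 1000000 in
/-- discarding the small-eigenvalue directions of the covariance costs at most
`4·dim(H)·δ` in squared 2-Wasserstein distance: if `G ~ N(0,Σ)` (characterized through its
one-dimensional marginals along the eigenbasis `b` with eigenvalues `lam`),
`Π_δ`/`Π_δ^⊥` are the orthogonal projections onto the eigendirections with `λ_j ≤ δ`
(resp. `λ_j > δ`), and `E‖Π_δ X‖² ≤ δ·dim H`, then
`W₂²(X,G) ≤ W₂²(Π_δ^⊥ X, Π_δ^⊥ G) + 4·dim(H)·δ`. -/
theorem stmt4 {H : Type*} [NormedAddCommGroup H] [InnerProductSpace ℝ H]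
    [FiniteDimensional ℝ H] [MeasurableSpace H] [BorelSpace H]
    {Ω : Type*} [MeasureSpace Ω] [IsProbabilityMeasure (ℙ : Measure Ω)]
    (N : ℕ) (hN : N = Module.finrank ℝ H)
    (b : OrthonormalBasis (Fin N) ℝ H) (lam : Fin N → ℝ) (hlam : ∀ j, 0 ≤ lam j)
    (δ : ℝ) (hδ : 0 < δ)
    (Pd Pdperp : H →L[ℝ] H)
    (hPd : ∀ x, Pd x = ∑ j ∈ Finset.univ.filter (fun j => lam j ≤ δ), ⟪b j, x⟫ • b j)
    (hPdperp : ∀ x, Pdperp x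
      = ∑ j ∈ Finset.univ.filter (fun j => δ < lam j), ⟪b j, x⟫ • b j)
    (X G : Ω → H) (hX : Measurable X) (hG : Measurable G)
    (hGlaw : ∀ v : H, Measure.map (fun ω => ⟪v, G ω⟫) ℙ
      = gaussianReal 0 (Real.toNNReal (∑ j, lam j * ⟪b j, v⟫ ^ 2)))
    (hXproj : ∫ ω, ‖Pd (X ω)‖ ^ 2 ∂ℙ ≤ δ * N) :
    W2sq (Measure.map X ℙ) (Measure.map G ℙ)
      ≤ W2sq (Measure.map (fun ω => Pdperp (X ω)) ℙ)
          (Measure.map (fun ω => Pdperp (G ω)) ℙ) + 4 * N * δ := by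
  classical
  set A : Finset (Fin N) := Finset.univ.filter (fun j => lam j ≤ δ) with hA
  ------------------------------------------------------------------
  -- Deterministic Hilbert-space facts
  ------------------------------------------------------------------
  have hPd' : ∀ u : H, Pd u = ∑ j, (if lam j ≤ δ then ⟪b j, u⟫ else 0) • b j := by
    intro u
    rw [hPd, Finset.sum_filter]
    congr 1; ext j
    split <;> simp
  have hPdperp' : ∀ u : H, Pdperp u = ∑ j, (if δ < lam j then ⟪b j, u⟫ else 0) • b j := by
    intro u
    rw [hPdperp, Finset.sum_filter]
    congr 1; ext j
    split <;> simp
  have hdecomp : ∀ u : H, Pd u + Pdperp u = u := by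
    intro u
    rw [hPd' u, hPdperp' u, ← Finset.sum_add_distrib]
    have : ∀ j, (if lam j ≤ δ then ⟪b j, u⟫ else 0) • b j
        + (if δ < lam j then ⟪b j, u⟫ else 0) • b j = ⟪b j, u⟫ • b j := by
      intro j
      rcases le_or_gt (lam j) δ with h | h
      · rw [if_pos h, if_neg (not_lt.mpr h)]; simp
      · rw [if_neg (not_le.mpr h), if_pos h]; simp
    simp_rw [this]
    exact b.sum_repr' u
  have horth : ∀ u w : H, ⟪Pd u, Pdperp w⟫ = 0 := by
    intro u w
    rw [hPd' u, hPdperp' w, b.orthonormal.inner_sum]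
    refine Finset.sum_eq_zero fun j _ => ?_
    rcases le_or_gt (lam j) δ with h | h
    · rw [if_neg (not_lt.mpr h)]; simp
    · rw [if_neg (not_le.mpr h)]; simp
  have hpyth : ∀ u : H, ‖u‖ ^ 2 = ‖Pd u‖ ^ 2 + ‖Pdperp u‖ ^ 2 := by
    intro u
    conv_lhs => rw [← hdecomp u]
    rw [norm_add_sq_real, horth u u]
    ring
  have hPdnorm : ∀ u : H, ‖Pd u‖ ^ 2 = ∑ j ∈ A, ⟪b j, u⟫ ^ 2 := by
    intro u
    rw [← real_inner_self_eq_norm_sq, hPd' u, b.orthonormal.inner_sum, hA, Finset.sum_filter]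
    congr 1; ext j
    rcases le_or_gt (lam j) δ with h | h
    · simp only [if_pos h]
      simp [sq]
    · simp only [if_neg (not_le.mpr h)]
      simp
  have hPdle : ∀ u : H, ‖Pd u‖ ^ 2 ≤ ‖u‖ ^ 2 := by
    intro u
    rw [hpyth u]
    nlinarith [sq_nonneg ‖Pdperp u‖]
  have hPerple : ∀ u : H, ‖Pdperp u‖ ^ 2 ≤ ‖u‖ ^ 2 := by
    intro u
    rw [hpyth u]
    nlinarith [sq_nonneg ‖Pd u‖]
  ------------------------------------------------------------------
  -- Notation
  ------------------------------------------------------------------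
  set Y : Ω → H := fun ω => Pdperp (X ω) with hYdef
  set Z : Ω → H := fun ω => Pdperp (G ω) with hZdef
  have hY : Measurable Y := Pdperp.continuous.measurable.comp hX
  have hZ : Measurable Z := Pdperp.continuous.measurable.comp hG
  set μX : Measure H := Measure.map X ℙ with hμX
  set μG : Measure H := Measure.map G ℙ with hμG
  set μY : Measure H := Measure.map Y ℙ with hμY
  set μZ : Measure H := Measure.map Z ℙ with hμZ
  have hfmeas : Measurable fun q : H × H => ‖q.1 - q.2‖ ^ 2 :=
    ((continuous_fst.sub continuous_snd).norm.pow 2).measurable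
  have hPdXmeas : Measurable fun ω => ‖Pd (X ω)‖ ^ 2 :=
    ((Pd.continuous.measurable.comp hX).norm.pow_const 2)
  have hPdGmeas : Measurable fun ω => ‖Pd (G ω)‖ ^ 2 :=
    ((Pd.continuous.measurable.comp hG).norm.pow_const 2)
  have hPdx : Measurable fun x : H => ENNReal.ofReal (‖Pd x‖ ^ 2) :=
    (Pd.continuous.norm.pow 2).measurable.ennreal_ofReal
  ------------------------------------------------------------------
  -- Gaussian bound: BG := ∫⁻ ‖Pd G‖² ≤ ofReal (δ * N)
  ------------------------------------------------------------------
  have hvar : ∀ j : Fin N, (∑ k, lam k * ⟪b k, b j⟫ ^ 2) = lam j := by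
    intro j
    have hbkj : ∀ k, ⟪b k, b j⟫ = if k = j then (1:ℝ) else 0 :=
      fun k => orthonormal_iff_ite.mp b.orthonormal k j
    rw [Finset.sum_eq_single j]
    · rw [hbkj j, if_pos rfl]; ring
    · intro k _ hkj
      rw [hbkj k, if_neg hkj]; ring
    · intro h; exact absurd (Finset.mem_univ j) h
  have hinnermeas : ∀ j : Fin N, Measurable fun ω => ⟪b j, G ω⟫ :=
    fun j => (continuous_const.inner continuous_id).measurable.comp hG
  have hBGj : ∀ j ∈ A, ∫⁻ ω, ENNReal.ofReal (⟪b j, G ω⟫ ^ 2) ∂ℙ = ENNReal.ofReal (lam j) := by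
    intro j _
    have hsq : Measurable fun t : ℝ => ENNReal.ofReal (t ^ 2) :=
      (measurable_id.pow_const 2).ennreal_ofReal
    rw [← lintegral_map hsq (hinnermeas j), hGlaw (b j), hvar j, aux_lintegral_sq_gauss]
    rw [ENNReal.ofReal, ENNReal.coe_inj]
  have hBG : ∫⁻ ω, ENNReal.ofReal (‖Pd (G ω)‖ ^ 2) ∂ℙ ≤ ENNReal.ofReal (δ * N) := by
    have h1 : ∀ ω, ENNReal.ofReal (‖Pd (G ω)‖ ^ 2)
        = ∑ j ∈ A, ENNReal.ofReal (⟪b j, G ω⟫ ^ 2) := by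
      intro ω
      rw [hPdnorm (G ω), ENNReal.ofReal_sum_of_nonneg (fun j _ => sq_nonneg _)]
    calc ∫⁻ ω, ENNReal.ofReal (‖Pd (G ω)‖ ^ 2) ∂ℙ
        = ∑ j ∈ A, ∫⁻ ω, ENNReal.ofReal (⟪b j, G ω⟫ ^ 2) ∂ℙ := by
          simp_rw [h1]
          exact lintegral_finset_sum A fun j _ =>
            ((hinnermeas j).pow_const 2).ennreal_ofReal
      _ = ∑ j ∈ A, ENNReal.ofReal (lam j) := Finset.sum_congr rfl hBGj
      _ = ENNReal.ofReal (∑ j ∈ A, lam j) :=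
          (ENNReal.ofReal_sum_of_nonneg (fun j _ => hlam j)).symm
      _ ≤ ENNReal.ofReal (δ * N) := by
          refine ENNReal.ofReal_le_ofReal ?_
          calc ∑ j ∈ A, lam j ≤ ∑ _j ∈ A, δ :=
                Finset.sum_le_sum fun j hj => (Finset.mem_filter.mp hj).2
            _ = A.card * δ := by rw [Finset.sum_const, nsmul_eq_mul]
            _ ≤ N * δ := by
                have : A.card ≤ N := le_trans (Finset.card_filter_le _ _) (by simp)
                have h0 : (A.card : ℝ) ≤ N := by exact_mod_cast this
                nlinarith
            _ = δ * N := by ring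
  ------------------------------------------------------------------
  -- conditional kernels
  ------------------------------------------------------------------
  set κ : ProbabilityTheory.Kernel H H := condDistrib X Y ℙ with hκdef
  set η : ProbabilityTheory.Kernel H H := condDistrib G Z ℙ with hηdef
  have hκ : μY ⊗ₘ κ = Measure.map (fun ω => (Y ω, X ω)) ℙ := by
    have h1 : (Measure.map (fun ω => (Y ω, X ω)) ℙ).fst = μY :=
      Measure.fst_map_prodMk₀ hX.aemeasurable
    have h2 := Measure.disintegrate (ρ := Measure.map (fun ω => (Y ω, X ω)) ℙ) (ρCond := (Measure.map (fun ω => (Y ω, X ω)) ℙ).condKernel)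
    rw [hκdef, condDistrib, ← h1]
    exact h2
  have hη : μZ ⊗ₘ η = Measure.map (fun ω => (Z ω, G ω)) ℙ := by
    have h1 : (Measure.map (fun ω => (Z ω, G ω)) ℙ).fst = μZ :=
      Measure.fst_map_prodMk₀ hG.aemeasurable
    have h2 := Measure.disintegrate (ρ := Measure.map (fun ω => (Z ω, G ω)) ℙ) (ρCond := (Measure.map (fun ω => (Z ω, G ω)) ℙ).condKernel)
    rw [hηdef, condDistrib, ← h1]
    exact h2
  -- the graph property
  have hgraphset : MeasurableSet {p : H × H | Pdperp p.2 = p.1} :=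
    (isClosed_eq (Pdperp.continuous.comp continuous_snd) continuous_fst).measurableSet
  have hκae : ∀ᵐ y ∂μY, ∀ᵐ x ∂(κ y), Pdperp x = y := by
    have h1 : ∀ᵐ p ∂(Measure.map (fun ω => (Y ω, X ω)) ℙ), Pdperp p.2 = p.1 := by
      rw [MeasureTheory.ae_map_iff (hY.prodMk hX).aemeasurable hgraphset]
      exact Filter.Eventually.of_forall fun ω => rfl
    rw [← hκ] at h1
    exact Measure.ae_ae_of_ae_compProd h1
  have hηae : ∀ᵐ z ∂μZ, ∀ᵐ g ∂(η z), Pdperp g = z := by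
    have h1 : ∀ᵐ p ∂(Measure.map (fun ω => (Z ω, G ω)) ℙ), Pdperp p.2 = p.1 := by
      rw [MeasureTheory.ae_map_iff (hZ.prodMk hG).aemeasurable hgraphset]
      exact Filter.Eventually.of_forall fun ω => rfl
    rw [← hη] at h1
    exact Measure.ae_ae_of_ae_compProd h1
  ------------------------------------------------------------------
  -- The two sInf sets
  ------------------------------------------------------------------
  set S : Set ℝ := { r | ∃ π : Measure (H × H), IsProbabilityMeasure π ∧
    π.map Prod.fst = μX ∧ π.map Prod.snd = μG ∧ r = ∫ p, ‖p.1 - p.2‖ ^ 2 ∂π } with hS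
  set T : Set ℝ := { r | ∃ π : Measure (H × H), IsProbabilityMeasure π ∧
    π.map Prod.fst = μY ∧ π.map Prod.snd = μZ ∧ r = ∫ p, ‖p.1 - p.2‖ ^ 2 ∂π } with hT
  have hSlb : ∀ r ∈ S, (0:ℝ) ≤ r := by
    rintro r ⟨π, _, _, _, rfl⟩
    exact integral_nonneg fun p => sq_nonneg _
  have hTne : T.Nonempty := by
    refine ⟨∫ p, ‖p.1 - p.2‖ ^ 2 ∂(Measure.map (fun ω => (Y ω, Z ω)) ℙ),
      Measure.map (fun ω => (Y ω, Z ω)) ℙ, ?_, ?_, ?_, rfl⟩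
    · exact Measure.isProbabilityMeasure_map (hY.prodMk hZ).aemeasurable
    · rw [Measure.map_map measurable_fst (hY.prodMk hZ)]; rfl
    · rw [Measure.map_map measurable_snd (hY.prodMk hZ)]; rfl
  -- key step
  have key : ∀ r ∈ T, ∃ r' ∈ S, r' ≤ r + 4 * N * δ := by
    rintro r ⟨π, hπprob, hπ1, hπ2, hrdef⟩
    haveI := hπprob
    have hr0 : (0:ℝ) ≤ r := hrdef ▸ integral_nonneg fun p => sq_nonneg _
    have hc0 : (0:ℝ) ≤ 4 * N * δ := by positivity
    set K : ProbabilityTheory.Kernel (H × H) (H × H) :=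
      (κ.comap Prod.fst measurable_fst).prod (η.comap Prod.snd measurable_snd) with hKdef
    have hKapp : ∀ p : H × H, K p = (κ p.1).prod (η p.2) := by
      intro p
      rw [hKdef, ProbabilityTheory.Kernel.prod_apply, ProbabilityTheory.Kernel.comap_apply,
        ProbabilityTheory.Kernel.comap_apply]
    set m : Measure ((H × H) × (H × H)) := π ⊗ₘ K with hmdef
    haveI hmprob : IsProbabilityMeasure m :=
      ⟨by rw [hmdef, Measure.compProd_apply_univ]; exact measure_univ⟩
    set γ : Measure (H × H) := m.map Prod.snd with hγdef
    haveI : IsProbabilityMeasure γ := Measure.isProbabilityMeasure_map measurable_snd.aemeasurable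
    have hmfst : m.map Prod.fst = π := Measure.fst_compProd π K
    -- first marginal of γ
    have hγ1 : γ.map Prod.fst = μX := by
      ext s hs
      have hls : MeasurableSet ((Prod.fst ∘ Prod.snd : (H × H) × (H × H) → H) ⁻¹' s) :=
        (measurable_fst.comp measurable_snd) hs
      rw [hγdef, Measure.map_map measurable_fst measurable_snd,
        Measure.map_apply (measurable_fst.comp measurable_snd) hs, hmdef,
        Measure.compProd_apply hls]
      have hint : ∀ p : H × H,
          K p (Prod.mk p ⁻¹' ((Prod.fst ∘ Prod.snd) ⁻¹' s)) = κ p.1 s := by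
        intro p
        have hpre : (Prod.mk p ⁻¹' ((Prod.fst ∘ Prod.snd : (H × H) × (H × H) → H) ⁻¹' s))
            = s ×ˢ (Set.univ : Set H) := by
          ext q; simp
        rw [hpre, hKapp, Measure.prod_prod, measure_univ, mul_one]
      simp_rw [hint]
      rw [show ∫⁻ p : H × H, κ p.1 s ∂π = ∫⁻ y, κ y s ∂(π.map Prod.fst) from
        (lintegral_map (κ.measurable_coe hs) measurable_fst).symm, hπ1]
      have hXs : μX s = (μY ⊗ₘ κ) (Set.univ ×ˢ s) := by
        rw [hκ, Measure.map_apply (hY.prodMk hX) (MeasurableSet.univ.prod hs), hμX,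
          Measure.map_apply hX hs]
        congr 1
        ext ω; simp
      rw [hXs, Measure.compProd_apply_prod MeasurableSet.univ hs, Measure.restrict_univ]
    -- second marginal of γ
    have hγ2 : γ.map Prod.snd = μG := by
      ext s hs
      have hls : MeasurableSet ((Prod.snd ∘ Prod.snd : (H × H) × (H × H) → H) ⁻¹' s) :=
        (measurable_snd.comp measurable_snd) hs
      rw [hγdef, Measure.map_map measurable_snd measurable_snd,
        Measure.map_apply (measurable_snd.comp measurable_snd) hs, hmdef,
        Measure.compProd_apply hls]
      have hint : ∀ p : H × H,
          K p (Prod.mk p ⁻¹' ((Prod.snd ∘ Prod.snd) ⁻¹' s)) = η p.2 s := by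
        intro p
        have hpre : (Prod.mk p ⁻¹' ((Prod.snd ∘ Prod.snd : (H × H) × (H × H) → H) ⁻¹' s))
            = (Set.univ : Set H) ×ˢ s := by
          ext q; simp
        rw [hpre, hKapp, Measure.prod_prod, measure_univ, one_mul]
      simp_rw [hint]
      rw [show ∫⁻ p : H × H, η p.2 s ∂π = ∫⁻ z, η z s ∂(π.map Prod.snd) from
        (lintegral_map (η.measurable_coe hs) measurable_snd).symm, hπ2]
      have hGs : μG s = (μZ ⊗ₘ η) (Set.univ ×ˢ s) := by
        rw [hη, Measure.map_apply (hZ.prodMk hG) (MeasurableSet.univ.prod hs), hμG,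
          Measure.map_apply hG hs]
        congr 1
        ext ω; simp
      rw [hGs, Measure.compProd_apply_prod MeasurableSet.univ hs, Measure.restrict_univ]
    -- a.e. graph property on the big space
    have haem : ∀ᵐ p ∂m, Pdperp p.2.1 = p.1.1 ∧ Pdperp p.2.2 = p.1.2 := by
      have hπfst : ∀ᵐ p ∂π, ∀ᵐ x ∂(κ p.1), Pdperp x = p.1 := by
        have h := hκae; rw [← hπ1] at h
        exact ae_of_ae_map measurable_fst.aemeasurable h
      have hπsnd : ∀ᵐ p ∂π, ∀ᵐ g ∂(η p.2), Pdperp g = p.2 := by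
        have h := hηae; rw [← hπ2] at h
        exact ae_of_ae_map measurable_snd.aemeasurable h
      have haeK : ∀ᵐ p ∂π, ∀ᵐ q ∂(K p), Pdperp q.1 = p.1 ∧ Pdperp q.2 = p.2 := by
        filter_upwards [hπfst, hπsnd] with p h1 h2
        rw [hKapp]
        have hnull : ((κ p.1).prod (η p.2))
            ({x : H | ¬ Pdperp x = p.1} ×ˢ (Set.univ : Set H)
              ∪ (Set.univ : Set H) ×ˢ {x : H | ¬ Pdperp x = p.2}) = 0 := by
          refine measure_union_null ?_ ?_
          · rw [Measure.prod_prod, measure_univ, mul_one]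
            exact ae_iff.mp h1
          · rw [Measure.prod_prod, measure_univ, one_mul]
            exact ae_iff.mp h2
        refine ae_iff.mpr (measure_mono_null (fun q hq => ?_) hnull)
        simp only [Set.mem_setOf_eq, not_and_or] at hq
        rcases hq with hq | hq
        · exact Or.inl ⟨hq, Set.mem_univ _⟩
        · exact Or.inr ⟨Set.mem_univ _, hq⟩
      rw [hmdef]
      refine Measure.ae_compProd_of_ae_ae ?_ haeK
      rw [show {x : (H × H) × (H × H) | Pdperp x.2.1 = x.1.1 ∧ Pdperp x.2.2 = x.1.2}
          = {x : (H × H) × (H × H) | Pdperp x.2.1 = x.1.1}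
            ∩ {x : (H × H) × (H × H) | Pdperp x.2.2 = x.1.2} from rfl]
      exact ((isClosed_eq (Pdperp.continuous.comp (continuous_fst.comp continuous_snd))
          (continuous_fst.comp continuous_fst)).measurableSet).inter
        ((isClosed_eq (Pdperp.continuous.comp (continuous_snd.comp continuous_snd))
          (continuous_snd.comp continuous_fst)).measurableSet)
    -- lintegral quantities
    set L : ℝ≥0∞ := ∫⁻ p : H × H, ENNReal.ofReal (‖p.1 - p.2‖ ^ 2) ∂π with hLdef
    set L' : ℝ≥0∞ := ∫⁻ q : H × H, ENNReal.ofReal (‖q.1 - q.2‖ ^ 2) ∂γ with hL'def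
    set AX : ℝ≥0∞ := ∫⁻ ω, ENNReal.ofReal (‖Pd (X ω)‖ ^ 2) ∂ℙ with hAXdef
    set BG : ℝ≥0∞ := ∫⁻ ω, ENNReal.ofReal (‖Pd (G ω)‖ ^ 2) ∂ℙ with hBGdef
    have hofmeas : Measurable fun q : H × H => ENNReal.ofReal (‖q.1 - q.2‖ ^ 2) :=
      hfmeas.ennreal_ofReal
    -- transfers between spaces
    have hLm : ∫⁻ p, ENNReal.ofReal (‖p.1.1 - p.1.2‖ ^ 2) ∂m = L := by
      rw [hLdef, ← hmfst, lintegral_map hofmeas measurable_fst]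
    have hL'm : ∫⁻ p, ENNReal.ofReal (‖p.2.1 - p.2.2‖ ^ 2) ∂m = L' := by
      rw [hL'def, hγdef, lintegral_map hofmeas measurable_snd]
    have hAXγ : ∫⁻ q : H × H, ENNReal.ofReal (‖Pd q.1‖ ^ 2) ∂γ = AX := by
      calc ∫⁻ q : H × H, ENNReal.ofReal (‖Pd q.1‖ ^ 2) ∂γ
          = ∫⁻ x, ENNReal.ofReal (‖Pd x‖ ^ 2) ∂(γ.map Prod.fst) :=
            (lintegral_map hPdx measurable_fst).symm
        _ = AX := by rw [hγ1, hμX, lintegral_map hPdx hX, hAXdef]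
    have hBGγ : ∫⁻ q : H × H, ENNReal.ofReal (‖Pd q.2‖ ^ 2) ∂γ = BG := by
      calc ∫⁻ q : H × H, ENNReal.ofReal (‖Pd q.2‖ ^ 2) ∂γ
          = ∫⁻ x, ENNReal.ofReal (‖Pd x‖ ^ 2) ∂(γ.map Prod.snd) :=
            (lintegral_map hPdx measurable_snd).symm
        _ = BG := by rw [hγ2, hμG, lintegral_map hPdx hG, hBGdef]
    have hAXm : ∫⁻ p, ENNReal.ofReal (‖Pd p.2.1‖ ^ 2) ∂m = AX := by
      rw [← hAXγ, hγdef]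
      exact (lintegral_map (hPdx.comp measurable_fst) measurable_snd).symm
    have hBGm : ∫⁻ p, ENNReal.ofReal (‖Pd p.2.2‖ ^ 2) ∂m = BG := by
      rw [← hBGγ, hγdef]
      exact (lintegral_map (hPdx.comp measurable_snd) measurable_snd).symm
    have hBGlt : BG < ∞ := lt_of_le_of_lt hBG ENNReal.ofReal_lt_top
    -- L ≤ L'
    have hLle : L ≤ L' := by
      have hptw : ∀ᵐ p ∂m, ENNReal.ofReal (‖p.1.1 - p.1.2‖ ^ 2)
          ≤ ENNReal.ofReal (‖p.2.1 - p.2.2‖ ^ 2) := by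
        filter_upwards [haem] with p hp
        refine ENNReal.ofReal_le_ofReal ?_
        have he : p.1.1 - p.1.2 = Pdperp (p.2.1 - p.2.2) := by rw [map_sub, hp.1, hp.2]
        rw [he]
        exact hPerple _
      calc L = ∫⁻ p, ENNReal.ofReal (‖p.1.1 - p.1.2‖ ^ 2) ∂m := hLm.symm
        _ ≤ ∫⁻ p, ENNReal.ofReal (‖p.2.1 - p.2.2‖ ^ 2) ∂m := lintegral_mono_ae hptw
        _ = L' := hL'm
    -- AX ≤ 2 L' + 2 BG
    have hAXle : AX ≤ 2 * L' + 2 * BG := by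
      have hptw : ∀ p : (H × H) × (H × H), ENNReal.ofReal (‖Pd p.2.1‖ ^ 2)
          ≤ 2 * ENNReal.ofReal (‖p.2.1 - p.2.2‖ ^ 2) + 2 * ENNReal.ofReal (‖Pd p.2.2‖ ^ 2) := by
        intro p
        have hre : ‖Pd p.2.1‖ ^ 2 ≤ 2 * ‖p.2.1 - p.2.2‖ ^ 2 + 2 * ‖Pd p.2.2‖ ^ 2 := by
          have h1 : ‖Pd p.2.1‖ ≤ ‖Pd (p.2.1 - p.2.2)‖ + ‖Pd p.2.2‖ := by
            have : Pd p.2.1 = Pd (p.2.1 - p.2.2) + Pd p.2.2 := by rw [map_sub]; abel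
            rw [this]; exact norm_add_le _ _
          have h2 : ‖Pd (p.2.1 - p.2.2)‖ ^ 2 ≤ ‖p.2.1 - p.2.2‖ ^ 2 := hPdle _
          have h3 : ‖Pd p.2.1‖ ^ 2 ≤ (‖Pd (p.2.1 - p.2.2)‖ + ‖Pd p.2.2‖) ^ 2 :=
            pow_le_pow_left₀ (norm_nonneg _) h1 2
          nlinarith [h3, h2, sq_nonneg (‖Pd (p.2.1 - p.2.2)‖ - ‖Pd p.2.2‖)]
        calc ENNReal.ofReal (‖Pd p.2.1‖ ^ 2)
            ≤ ENNReal.ofReal (2 * ‖p.2.1 - p.2.2‖ ^ 2 + 2 * ‖Pd p.2.2‖ ^ 2) :=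
              ENNReal.ofReal_le_ofReal hre
          _ ≤ ENNReal.ofReal (2 * ‖p.2.1 - p.2.2‖ ^ 2)
              + ENNReal.ofReal (2 * ‖Pd p.2.2‖ ^ 2) := ENNReal.ofReal_add_le
          _ = 2 * ENNReal.ofReal (‖p.2.1 - p.2.2‖ ^ 2)
              + 2 * ENNReal.ofReal (‖Pd p.2.2‖ ^ 2) := by
              rw [ENNReal.ofReal_mul (by norm_num : (0:ℝ) ≤ 2),
                ENNReal.ofReal_mul (by norm_num : (0:ℝ) ≤ 2)]
              norm_num
      have hm1 : Measurable fun p : (H × H) × (H × H) =>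
          ENNReal.ofReal (‖p.2.1 - p.2.2‖ ^ 2) :=
        hofmeas.comp measurable_snd
      have hm2 : Measurable fun p : (H × H) × (H × H) => ENNReal.ofReal (‖Pd p.2.2‖ ^ 2) :=
        hPdx.comp (measurable_snd.comp measurable_snd)
      calc AX = ∫⁻ p, ENNReal.ofReal (‖Pd p.2.1‖ ^ 2) ∂m := hAXm.symm
        _ ≤ ∫⁻ p, (2 * ENNReal.ofReal (‖p.2.1 - p.2.2‖ ^ 2)
              + 2 * ENNReal.ofReal (‖Pd p.2.2‖ ^ 2)) ∂m := lintegral_mono hptw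
        _ = 2 * L' + 2 * BG := by
            rw [lintegral_add_left (hm1.const_mul 2), lintegral_const_mul 2 hm1,
              lintegral_const_mul 2 hm2, hL'm, hBGm]
    -- L' ≤ L + 2 AX + 2 BG
    have hL'le : L' ≤ L + 2 * AX + 2 * BG := by
      have hptw : ∀ᵐ p ∂m, ENNReal.ofReal (‖p.2.1 - p.2.2‖ ^ 2)
          ≤ ENNReal.ofReal (‖p.1.1 - p.1.2‖ ^ 2) + 2 * ENNReal.ofReal (‖Pd p.2.1‖ ^ 2)
            + 2 * ENNReal.ofReal (‖Pd p.2.2‖ ^ 2) := by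
        filter_upwards [haem] with p hp
        have hre : ‖p.2.1 - p.2.2‖ ^ 2
            ≤ ‖p.1.1 - p.1.2‖ ^ 2 + 2 * ‖Pd p.2.1‖ ^ 2 + 2 * ‖Pd p.2.2‖ ^ 2 := by
          have e1 : ‖p.2.1 - p.2.2‖ ^ 2
              = ‖Pd (p.2.1 - p.2.2)‖ ^ 2 + ‖Pdperp (p.2.1 - p.2.2)‖ ^ 2 := hpyth _
          have e2 : Pdperp (p.2.1 - p.2.2) = p.1.1 - p.1.2 := by
            rw [map_sub, hp.1, hp.2]
          have e3 : ‖Pd (p.2.1 - p.2.2)‖ ≤ ‖Pd p.2.1‖ + ‖Pd p.2.2‖ := by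
            rw [map_sub]; exact norm_sub_le _ _
          have e4 : ‖Pd (p.2.1 - p.2.2)‖ ^ 2 ≤ 2 * ‖Pd p.2.1‖ ^ 2 + 2 * ‖Pd p.2.2‖ ^ 2 := by
            have e3' : ‖Pd (p.2.1 - p.2.2)‖ ^ 2 ≤ (‖Pd p.2.1‖ + ‖Pd p.2.2‖) ^ 2 :=
              pow_le_pow_left₀ (norm_nonneg _) e3 2
            nlinarith [e3', sq_nonneg (‖Pd p.2.1‖ - ‖Pd p.2.2‖)]
          rw [e1, e2]
          linarith
        calc ENNReal.ofReal (‖p.2.1 - p.2.2‖ ^ 2)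
            ≤ ENNReal.ofReal (‖p.1.1 - p.1.2‖ ^ 2 + 2 * ‖Pd p.2.1‖ ^ 2
                + 2 * ‖Pd p.2.2‖ ^ 2) := ENNReal.ofReal_le_ofReal hre
          _ ≤ ENNReal.ofReal (‖p.1.1 - p.1.2‖ ^ 2 + 2 * ‖Pd p.2.1‖ ^ 2)
                + ENNReal.ofReal (2 * ‖Pd p.2.2‖ ^ 2) := ENNReal.ofReal_add_le
          _ ≤ ENNReal.ofReal (‖p.1.1 - p.1.2‖ ^ 2) + ENNReal.ofReal (2 * ‖Pd p.2.1‖ ^ 2)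
                + ENNReal.ofReal (2 * ‖Pd p.2.2‖ ^ 2) :=
              add_le_add_left ENNReal.ofReal_add_le _
          _ = ENNReal.ofReal (‖p.1.1 - p.1.2‖ ^ 2) + 2 * ENNReal.ofReal (‖Pd p.2.1‖ ^ 2)
                + 2 * ENNReal.ofReal (‖Pd p.2.2‖ ^ 2) := by
              rw [ENNReal.ofReal_mul (by norm_num : (0:ℝ) ≤ 2),
                ENNReal.ofReal_mul (by norm_num : (0:ℝ) ≤ 2)]
              norm_num
      have hm0 : Measurable fun p : (H × H) × (H × H) =>
          ENNReal.ofReal (‖p.1.1 - p.1.2‖ ^ 2) := hofmeas.comp measurable_fst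
      have hm1 : Measurable fun p : (H × H) × (H × H) => ENNReal.ofReal (‖Pd p.2.1‖ ^ 2) :=
        hPdx.comp (measurable_fst.comp measurable_snd)
      have hm2 : Measurable fun p : (H × H) × (H × H) => ENNReal.ofReal (‖Pd p.2.2‖ ^ 2) :=
        hPdx.comp (measurable_snd.comp measurable_snd)
      calc L' = ∫⁻ p, ENNReal.ofReal (‖p.2.1 - p.2.2‖ ^ 2) ∂m := hL'm.symm
        _ ≤ ∫⁻ p, (ENNReal.ofReal (‖p.1.1 - p.1.2‖ ^ 2)
              + 2 * ENNReal.ofReal (‖Pd p.2.1‖ ^ 2)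
              + 2 * ENNReal.ofReal (‖Pd p.2.2‖ ^ 2)) ∂m := lintegral_mono_ae hptw
        _ = L + 2 * AX + 2 * BG := by
            rw [lintegral_add_left (f := fun p : (H × H) × (H × H) => ENNReal.ofReal (‖p.1.1 - p.1.2‖ ^ 2) + 2 * ENNReal.ofReal (‖Pd p.2.1‖ ^ 2)) (hm0.add (hm1.const_mul 2)),
              lintegral_add_left hm0, lintegral_const_mul 2 hm1,
              lintegral_const_mul 2 hm2, hLm, hAXm, hBGm]
    -- integrability characterizations
    have hγiff : Integrable (fun q : H × H => ‖q.1 - q.2‖ ^ 2) γ ↔ L' < ∞ := by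
      rw [hL'def]
      exact aux_integrable_iff hfmeas.aestronglyMeasurable (fun q => sq_nonneg _)
    have hπiff : Integrable (fun q : H × H => ‖q.1 - q.2‖ ^ 2) π ↔ L < ∞ := by
      rw [hLdef]
      exact aux_integrable_iff hfmeas.aestronglyMeasurable (fun q => sq_nonneg _)
    -- dichotomy on integrability of ‖Pd X‖²
    by_cases hXint : Integrable (fun ω => ‖Pd (X ω)‖ ^ 2) ℙ
    · -- integrable case
      have hAXle' : AX ≤ ENNReal.ofReal (δ * N) := by
        rw [hAXdef, ← ofReal_integral_eq_lintegral_ofReal hXint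
          (Filter.Eventually.of_forall fun ω => sq_nonneg _)]
        exact ENNReal.ofReal_le_ofReal hXproj
      have hbound : L' ≤ L + ENNReal.ofReal (4 * (δ * N)) := by
        calc L' ≤ L + 2 * AX + 2 * BG := hL'le
          _ ≤ L + 2 * ENNReal.ofReal (δ * N) + 2 * ENNReal.ofReal (δ * N) := by
              gcongr
          _ = L + ENNReal.ofReal (4 * (δ * N)) := by
              rw [ENNReal.ofReal_mul (by norm_num : (0:ℝ) ≤ 4)]
              rw [show ENNReal.ofReal 4 = 4 from by norm_num]
              ring
      by_cases hL'top : L' = ∞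
      · -- degenerate: both integrals are 0
        have hLtop : L = ∞ := by
          by_contra h
          have : L' < ∞ := lt_of_le_of_lt hbound
            (ENNReal.add_lt_top.mpr ⟨lt_top_iff_ne_top.mpr h, ENNReal.ofReal_lt_top⟩)
          rw [hL'top] at this
          exact absurd this (lt_irrefl _)
        have hrzero : r = 0 := by
          rw [hrdef]
          refine integral_undef fun h => ?_
          rw [hπiff, hLtop] at h
          exact absurd h (lt_irrefl _)
        have hnotint : ¬ Integrable (fun q : H × H => ‖q.1 - q.2‖ ^ 2) γ := by
          intro h
          rw [hγiff, hL'top] at h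
          exact absurd h (lt_irrefl _)
        refine ⟨0, ⟨γ, inferInstance, hγ1, hγ2, (integral_undef hnotint).symm⟩, ?_⟩
        rw [hrzero]
        linarith
      · -- main case: everything is finite
        have hL'lt : L' < ∞ := lt_top_iff_ne_top.mpr hL'top
        have hLlt : L < ∞ := lt_of_le_of_lt hLle hL'lt
        have hγint : Integrable (fun q : H × H => ‖q.1 - q.2‖ ^ 2) γ := hγiff.mpr hL'lt
        have hπint : Integrable (fun q : H × H => ‖q.1 - q.2‖ ^ 2) π := hπiff.mpr hLlt
        have hr'eq : ∫ q : H × H, ‖q.1 - q.2‖ ^ 2 ∂γ = L'.toReal := by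
          rw [hL'def, ← ofReal_integral_eq_lintegral_ofReal hγint
            (Filter.Eventually.of_forall fun q => sq_nonneg _),
            ENNReal.toReal_ofReal (integral_nonneg fun q => sq_nonneg _)]
        have hreq : r = L.toReal := by
          rw [hrdef, hLdef, ← ofReal_integral_eq_lintegral_ofReal hπint
            (Filter.Eventually.of_forall fun q => sq_nonneg _),
            ENNReal.toReal_ofReal (integral_nonneg fun q => sq_nonneg _)]
        refine ⟨∫ q : H × H, ‖q.1 - q.2‖ ^ 2 ∂γ, ⟨γ, inferInstance, hγ1, hγ2, rfl⟩, ?_⟩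
        rw [hr'eq, hreq]
        calc L'.toReal ≤ (L + ENNReal.ofReal (4 * (δ * N))).toReal := by
              refine ENNReal.toReal_mono ?_ hbound
              exact ENNReal.add_ne_top.mpr ⟨hLlt.ne, ENNReal.ofReal_ne_top⟩
          _ = L.toReal + 4 * (δ * N) := by
              rw [ENNReal.toReal_add hLlt.ne ENNReal.ofReal_ne_top,
                ENNReal.toReal_ofReal (by positivity)]
          _ = L.toReal + 4 * N * δ := by ring
    · -- non-integrable case: the γ-integral is 0
      have hAXtop : AX = ∞ := by
        by_contra h
        exact hXint ((aux_integrable_iff hPdXmeas.aestronglyMeasurable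
          (fun ω => sq_nonneg _)).mpr (lt_top_iff_ne_top.mpr h))
      have hL'top : L' = ∞ := by
        by_contra h
        have h2 : AX < ∞ := lt_of_le_of_lt hAXle
          (ENNReal.add_lt_top.mpr ⟨ENNReal.mul_lt_top ENNReal.ofNat_lt_top
              (lt_top_iff_ne_top.mpr h),
            ENNReal.mul_lt_top ENNReal.ofNat_lt_top hBGlt⟩)
        rw [hAXtop] at h2
        exact absurd h2 (lt_irrefl _)
      have hnotint : ¬ Integrable (fun q : H × H => ‖q.1 - q.2‖ ^ 2) γ := by
        intro h
        rw [hγiff, hL'top] at h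
        exact absurd h (lt_irrefl _)
      refine ⟨0, ⟨γ, inferInstance, hγ1, hγ2, (integral_undef hnotint).symm⟩, ?_⟩
      linarith
  ------------------------------------------------------------------
  -- conclude
  ------------------------------------------------------------------
  have h1 : ∀ r ∈ T, sInf S ≤ r + 4 * N * δ := by
    intro r hr
    obtain ⟨r', hr'S, hr'le⟩ := key r hr
    exact le_trans (csInf_le ⟨0, hSlb⟩ hr'S) hr'le
  have h2 : sInf S - 4 * N * δ ≤ sInf T := by
    refine le_csInf hTne fun r hr => ?_
    linarith [h1 r hr]
  show sInf S ≤ sInf T + 4 * N * δ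
  linarith
end

section
/- For odd d = 2ℓ−1, consider the degree-d polynomial q(x) = n^{-ℓ/2} Σ_{i₁,…,i_ℓ=1}^n x_{i₁} x_{i₂}² ⋯ x_{i_ℓ}². For w a standard Gaussian vector in ℝⁿ, Var(q(w)) = Ω(n^{ℓ−1}) = Ω(n^{(d−1)/2}) as n → ∞ (with ℓ fixed). -/
open MeasureTheory ProbabilityTheory

/-- The standard Gaussian measure on `ℝⁿ`. -/
noncomputable def stdGaussianPi (n : ℕ) : Measure (Fin n → ℝ) :=
  Measure.pi fun _ => gaussianReal 0 1

open Real
open scoped ENNReal NNReal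

lemma pow_bound (k : ℕ) (t : ℝ) : |t|^k ≤ (1 + 4^k * k.factorial) * rexp ((1/4) * t^2) := by
  have hx : (0:ℝ) ≤ (1/4) * t^2 := by positivity
  have h1 : ((1/4) * t^2)^k / k.factorial ≤ rexp ((1/4) * t^2) := by
    have := Real.sum_le_exp_of_nonneg hx (k+1)
    refine le_trans ?_ this
    have := Finset.single_le_sum (f := fun i => ((1/4)*t^2)^i / i.factorial)
      (fun i _ => by positivity) (Finset.mem_range.2 (Nat.lt_succ_self k))
    simpa using this
  have h2 : t^(2*k) ≤ 4^k * k.factorial * rexp ((1/4)*t^2) := by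
    have he : ((1/4) * t^2)^k = t^(2*k) / 4^k := by
      rw [mul_pow, pow_mul, one_div, div_eq_mul_inv, inv_pow]; ring
    rw [he, div_div] at h1
    have h4 : (0:ℝ) < 4^k * k.factorial := by positivity
    calc t^(2*k) = (t^(2*k) / (4^k * k.factorial)) * (4^k * k.factorial) := by field_simp
      _ ≤ rexp ((1/4)*t^2) * (4^k * k.factorial) := mul_le_mul_of_nonneg_right h1 h4.le
      _ = 4^k * k.factorial * rexp ((1/4)*t^2) := by ring
  have hfac : (1:ℝ) ≤ 4^k * k.factorial := by
    have : (1:ℝ) ≤ 4^k := one_le_pow₀ (by norm_num)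
    have h2 : (1:ℝ) ≤ k.factorial := by exact_mod_cast Nat.one_le_iff_ne_zero.2 k.factorial_ne_zero
    nlinarith
  have hexp : (1:ℝ) ≤ rexp ((1/4)*t^2) := Real.one_le_exp hx
  rcases le_or_gt (|t|) 1 with h | h
  · have h0 : |t|^k ≤ 1 := pow_le_one₀ (abs_nonneg t) h
    nlinarith
  · have h1le : |t|^k ≤ |t|^(2*k) := pow_le_pow_right₀ h.le (by omega)
    have habs : |t|^(2*k) = t^(2*k) := by
      rw [← abs_pow, abs_eq_self, pow_mul]; positivity
    nlinarith [Real.exp_pos ((1/4)*t^2)]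

lemma integrable_pow_gauss (k : ℕ) :
    Integrable (fun t : ℝ => t ^ k) (gaussianReal 0 1) := by
  rw [gaussianReal_of_var_ne_zero 0 one_ne_zero, gaussianPDF_def,
    integrable_withDensity_iff ((measurable_gaussianPDFReal 0 1).ennreal_ofReal)
      (by filter_upwards with x using ENNReal.ofReal_lt_top)]
  have hc : (0:ℝ) < (√(2 * π))⁻¹ := by positivity
  apply Integrable.mono' (g := fun t => ((√(2*π))⁻¹ * (1 + 4^k * k.factorial)) * rexp (-(1/4) * t^2))
  · exact (integrable_exp_neg_mul_sq (by norm_num : (0:ℝ) < 1/4)).const_mul _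
  · exact ((measurable_id.pow_const k).mul
      ((measurable_gaussianPDFReal 0 1).ennreal_ofReal.ennreal_toReal)).aestronglyMeasurable
  · filter_upwards with t
    rw [gaussianPDFReal]
    simp only [NNReal.coe_one, mul_one]
    have htr : ENNReal.toReal (ENNReal.ofReal ((√(2 * π))⁻¹ * rexp (-(t - 0)^2 / 2))) =
        (√(2 * π))⁻¹ * rexp (-t^2 / 2) := by
      rw [ENNReal.toReal_ofReal (by positivity), sub_zero]
    rw [htr]
    have hnorm : ‖t ^ k * ((√(2*π))⁻¹ * rexp (-t^2/2))‖ = |t|^k * ((√(2*π))⁻¹ * rexp (-t^2/2)) := by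
      rw [norm_mul, norm_pow]
      rw [Real.norm_eq_abs t, Real.norm_eq_abs, abs_of_pos (mul_pos hc (Real.exp_pos _))]
    rw [hnorm]
    have hb := pow_bound k t
    have hsplit : rexp ((1/4)*t^2) * rexp (-t^2/2) = rexp (-(1/4)*t^2) := by
      rw [← Real.exp_add]; ring_nf
    calc |t|^k * ((√(2*π))⁻¹ * rexp (-t^2/2))
        ≤ ((1 + 4^k * k.factorial) * rexp ((1/4) * t^2)) * ((√(2*π))⁻¹ * rexp (-t^2/2)) := by
          apply mul_le_mul_of_nonneg_right hb (by positivity)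
      _ = ((√(2*π))⁻¹ * (1 + 4^k * k.factorial)) * (rexp ((1/4)*t^2) * rexp (-t^2/2)) := by ring
      _ = ((√(2*π))⁻¹ * (1 + 4^k * k.factorial)) * rexp (-(1/4) * t^2) := by rw [hsplit]

noncomputable def gM (k : ℕ) : ℝ := ∫ t, t ^ k ∂(gaussianReal 0 1)

lemma gM_zero : gM 0 = 1 := by simp [gM]

lemma gM_odd {k : ℕ} (hk : Odd k) : gM k = 0 := by
  have hmap : (gaussianReal 0 1).map (fun t : ℝ => (-1) * t) = gaussianReal 0 1 := by
    have := gaussianReal_map_const_mul (μ := 0) (v := 1) (-1)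
    simpa using this
  have h : gM k = ∫ t, ((-1) * t) ^ k ∂(gaussianReal 0 1) := by
    have h' := integral_map (μ := gaussianReal 0 1) (φ := fun t : ℝ => (-1) * t)
      (f := fun t : ℝ => t ^ k) ((measurable_id.const_mul (-1)).aemeasurable)
      ((measurable_id.pow_const k).aestronglyMeasurable)
    rw [hmap] at h'
    exact h'
  have h2 : ∫ t, ((-1) * t) ^ k ∂(gaussianReal 0 1) = -gM k := by
    simp_rw [mul_pow, hk.neg_one_pow, gM, neg_one_mul, integral_neg]
  linarith [h, h2]

lemma gM_even_nonneg (k : ℕ) : 0 ≤ gM (2 * k) := by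
  rw [gM]
  apply integral_nonneg
  intro t
  simp only [Pi.zero_apply]
  rw [pow_mul]
  positivity

lemma gM_two_pos : 0 < gM 2 := by
  rcases lt_or_eq_of_le (by simpa using gM_even_nonneg 1) with h | h
  · exact h
  exfalso
  have hint : Integrable (fun t : ℝ => t ^ 2) (gaussianReal 0 1) := integrable_pow_gauss 2
  have h0 : ∫ t, t ^ 2 ∂(gaussianReal 0 1) = 0 := by rw [← gM]; exact h.symm
  rw [integral_eq_zero_iff_of_nonneg (fun t => sq_nonneg t) hint] at h0
  have h0' : ∀ᵐ t ∂(gaussianReal 0 1), t ^ 2 = 0 := by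
    filter_upwards [h0] with t ht using by simpa using ht
  rw [MeasureTheory.ae_iff] at h0'
  have hne : (gaussianReal 0 1) {t : ℝ | t ^ 2 ≠ 0} = 0 := h0'
  have hzero : (gaussianReal 0 1) ({0} : Set ℝ) = 0 :=
    gaussianReal_absolutelyContinuous 0 one_ne_zero (Real.volume_singleton)
  have : (1 : ℝ≥0∞) ≤ 0 := by
    have huniv : (Set.univ : Set ℝ) ⊆ ({0} : Set ℝ) ∪ {t : ℝ | t ^ 2 ≠ 0} := by
      intro t _
      rcases eq_or_ne t 0 with rfl | ht
      · exact Or.inl rfl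
      · exact Or.inr (pow_ne_zero 2 ht)
    calc (1 : ℝ≥0∞) = (gaussianReal 0 1) Set.univ := by simp
      _ ≤ (gaussianReal 0 1) (({0} : Set ℝ) ∪ {t : ℝ | t ^ 2 ≠ 0}) := measure_mono huniv
      _ ≤ 0 + 0 := le_trans (measure_union_le _ _) (by rw [hzero, hne])
      _ = 0 := by simp
  simp at this

lemma gM_two_pow_le (a : ℕ) : gM 2 ^ a ≤ gM (2 * a) := by
  have hconv : ConvexOn ℝ (Set.Ici (0:ℝ)) (fun u : ℝ => u ^ a) := convexOn_pow a
  have h := hconv.map_integral_le (μ := gaussianReal 0 1) (f := fun t : ℝ => t ^ 2)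
    (continuous_pow a).continuousOn isClosed_Ici
    (Filter.Eventually.of_forall (fun t => sq_nonneg t))
    (integrable_pow_gauss 2) ?_
  · rw [gM, gM]
    simpa [← pow_mul, mul_comm a 2] using h
  · simp_rw [Function.comp_def, ← pow_mul]
    exact integrable_pow_gauss (2 * a)

instance (n : ℕ) : IsProbabilityMeasure (stdGaussianPi n) := by
  unfold stdGaussianPi; infer_instance

lemma integrable_monomial (n : ℕ) (e : Fin n → ℕ) :
    Integrable (fun x : Fin n → ℝ => ∏ c, x c ^ e c) (stdGaussianPi n) := by
  letI : MeasureSpace ℝ := ⟨gaussianReal 0 1⟩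
  haveI : SigmaFinite (volume : Measure ℝ) := by
    show SigmaFinite (gaussianReal 0 1); infer_instance
  exact Integrable.fintype_prod (f := fun c (t : ℝ) => t ^ e c)
    (fun c => integrable_pow_gauss (e c))

lemma integral_monomial (n : ℕ) (e : Fin n → ℕ) :
    ∫ x, (∏ c, x c ^ e c) ∂(stdGaussianPi n) = ∏ c, gM (e c) := by
  letI : MeasureSpace ℝ := ⟨gaussianReal 0 1⟩
  haveI : SigmaFinite (volume : Measure ℝ) := by
    show SigmaFinite (gaussianReal 0 1); infer_instance
  exact integral_fintype_prod_eq_prod (μ := fun _ => gaussianReal 0 1) (fun c (t : ℝ) => t ^ e c)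

-- canonicalization
lemma pow_single {n : ℕ} (x : Fin n → ℝ) (k : Fin n) (m : ℕ) :
    x k ^ m = ∏ c, x c ^ (if c = k then m else 0) := by
  rw [Finset.prod_congr rfl (fun c _ => pow_ite (c = k) (x c) m 0)]
  simp

lemma single_pow {n : ℕ} (x : Fin n → ℝ) (k : Fin n) :
    x k = ∏ c, x c ^ (if c = k then 1 else 0) := by
  simpa using pow_single x k 1

lemma sq_prod_count {ℓ n : ℕ} (s : Finset (Fin ℓ)) (i : Fin ℓ → Fin n) (x : Fin n → ℝ) :
    ∏ j ∈ s, x (i j) ^ 2 = ∏ c, x c ^ (2 * (s.filter fun j => i j = c).card) := by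
  rw [← Finset.prod_fiberwise_of_maps_to (t := Finset.univ) (g := i)
    (fun j _ => Finset.mem_univ (i j)) (fun j => x (i j) ^ 2)]
  refine Finset.prod_congr rfl fun c _ => ?_
  rw [Finset.prod_congr rfl (fun j hj => by
      rw [(Finset.mem_filter.1 hj).2]),
    Finset.prod_const, ← pow_mul, mul_comm]

lemma monomial_mul {n : ℕ} (x : Fin n → ℝ) (a b : Fin n → ℕ) :
    (∏ c, x c ^ a c) * (∏ c, x c ^ b c) = ∏ c, x c ^ (a c + b c) := by
  rw [← Finset.prod_mul_distrib]
  exact Finset.prod_congr rfl fun c _ => (pow_add (x c) (a c) (b c)).symm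

section Main

variable {ℓ n : ℕ}

def cnt (z : Fin ℓ) (i : Fin ℓ → Fin n) (c : Fin n) : ℕ :=
  (((Finset.univ.filter (fun j : Fin ℓ => j ≠ z))).filter (fun j => i j = c)).card

def e0 (z : Fin ℓ) (i : Fin ℓ → Fin n) (c : Fin n) : ℕ :=
  (if c = i z then 1 else 0) + 2 * cnt z i c

def eK (k : Fin n) (z : Fin ℓ) (i : Fin ℓ → Fin n) (c : Fin n) : ℕ :=
  (if c = k then 1 else 0) + e0 z i c

lemma termP_eq (z : Fin ℓ) (i : Fin ℓ → Fin n) (x : Fin n → ℝ) :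
    x (i z) * ∏ j ∈ Finset.univ.filter (fun j : Fin ℓ => j ≠ z), x (i j) ^ 2
      = ∏ c, x c ^ e0 z i c := by
  rw [single_pow x (i z), sq_prod_count, monomial_mul]
  rfl

lemma mul_termP_eq (k : Fin n) (z : Fin ℓ) (i : Fin ℓ → Fin n) (x : Fin n → ℝ) :
    x k * (x (i z) * ∏ j ∈ Finset.univ.filter (fun j : Fin ℓ => j ≠ z), x (i j) ^ 2)
      = ∏ c, x c ^ eK k z i c := by
  rw [termP_eq, single_pow x k, monomial_mul]
  rfl

lemma sum_cnt (z : Fin ℓ) (i : Fin ℓ → Fin n) :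
    ∑ c, cnt z i c = ℓ - 1 := by
  unfold cnt
  rw [← Finset.card_eq_sum_card_fiberwise (t := Finset.univ) (fun j _ => Finset.mem_univ (i j))]
  rw [Finset.filter_ne', Finset.card_erase_of_mem (Finset.mem_univ z)]
  simp

-- integral of a single P-term is zero
lemma integral_termP (z : Fin ℓ) (i : Fin ℓ → Fin n) :
    ∫ x, (x (i z) * ∏ j ∈ Finset.univ.filter (fun j : Fin ℓ => j ≠ z), x (i j) ^ 2)
      ∂(stdGaussianPi n) = 0 := by
  rw [show (fun x : Fin n → ℝ =>
      x (i z) * ∏ j ∈ Finset.univ.filter (fun j : Fin ℓ => j ≠ z), x (i j) ^ 2)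
      = fun x => ∏ c, x c ^ e0 z i c from funext (termP_eq z i)]
  rw [integral_monomial]
  apply Finset.prod_eq_zero (Finset.mem_univ (i z))
  rw [show e0 z i (i z) = 1 + 2 * cnt z i (i z) by simp [e0]]
  exact gM_odd ⟨cnt z i (i z), by ring⟩

lemma integral_mul_termP (k : Fin n) (z : Fin ℓ) (i : Fin ℓ → Fin n) :
    ∫ x, x k * (x (i z) * ∏ j ∈ Finset.univ.filter (fun j : Fin ℓ => j ≠ z), x (i j) ^ 2)
      ∂(stdGaussianPi n) = ∏ c, gM (eK k z i c) := by
  rw [show (fun x : Fin n → ℝ => x k *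
      (x (i z) * ∏ j ∈ Finset.univ.filter (fun j : Fin ℓ => j ≠ z), x (i j) ^ 2))
      = fun x => ∏ c, x c ^ eK k z i c from funext (mul_termP_eq k z i)]
  exact integral_monomial n _

lemma prod_gM_eK_off (k : Fin n) (z : Fin ℓ) (i : Fin ℓ → Fin n) (hk : k ≠ i z) :
    ∏ c, gM (eK k z i c) = 0 := by
  apply Finset.prod_eq_zero (Finset.mem_univ k)
  rw [show eK k z i k = 1 + 2 * cnt z i k by simp [eK, e0, hk]]
  exact gM_odd ⟨cnt z i k, by ring⟩

lemma prod_gM_eK_diag (hℓ : 1 ≤ ℓ) (z : Fin ℓ) (i : Fin ℓ → Fin n) :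
    gM 2 ^ ℓ ≤ ∏ c, gM (eK (i z) z i c) := by
  have haF : ∀ c, eK (i z) z i c = 2 * ((if c = i z then 1 else 0) + cnt z i c) := by
    intro c
    simp only [eK, e0]
    split <;> ring
  calc gM 2 ^ ℓ = gM 2 ^ (∑ c, ((if c = i z then 1 else 0) + cnt z i c)) := by
        rw [Finset.sum_add_distrib, sum_cnt, Finset.sum_ite_eq' Finset.univ (i z) (fun _ => 1)]
        simp only [Finset.mem_univ, if_true]
        congr 1
        omega
    _ = ∏ c, gM 2 ^ ((if c = i z then 1 else 0) + cnt z i c) := by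
        rw [Finset.prod_pow_eq_pow_sum]
    _ ≤ ∏ c, gM (eK (i z) z i c) := by
        apply Finset.prod_le_prod
        · intro c _; exact pow_nonneg gM_two_pos.le _
        · intro c _
          rw [haF c]
          exact gM_two_pow_le _

end Main

noncomputable def Pfun {ℓ n : ℕ} (z : Fin ℓ) (x : Fin n → ℝ) : ℝ :=
  ∑ i : Fin ℓ → Fin n,
    (x (i z) * ∏ j ∈ Finset.univ.filter (fun j : Fin ℓ => j ≠ z), x (i j) ^ 2)

noncomputable def Sfun {n : ℕ} (x : Fin n → ℝ) : ℝ := ∑ k, x k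

section E
variable {ℓ n : ℕ} (z : Fin ℓ)

lemma measurable_monomial (e : Fin n → ℕ) :
    Measurable (fun x : Fin n → ℝ => ∏ c, x c ^ e c) :=
  Finset.measurable_prod _ (fun c _ => (measurable_pi_apply c).pow_const (e c))

lemma sq_monomial (e : Fin n → ℕ) :
    (fun x : Fin n → ℝ => (∏ c, x c ^ e c) ^ 2) = fun x => ∏ c, x c ^ (2 * e c) := by
  funext x
  rw [← Finset.prod_pow]
  exact Finset.prod_congr rfl fun c _ => by rw [← pow_mul, mul_comm]

lemma memℒp_monomial (e : Fin n → ℕ) :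
    MemLp (fun x : Fin n → ℝ => ∏ c, x c ^ e c) 2 (stdGaussianPi n) := by
  refine (memLp_two_iff_integrable_sq (measurable_monomial e).aestronglyMeasurable).2 ?_
  rw [sq_monomial]
  exact integrable_monomial n _

lemma integrable_term (i : Fin ℓ → Fin n) :
    Integrable (fun x : Fin n → ℝ =>
      x (i z) * ∏ j ∈ Finset.univ.filter (fun j : Fin ℓ => j ≠ z), x (i j) ^ 2)
      (stdGaussianPi n) := by
  rw [show (fun x : Fin n → ℝ =>
      x (i z) * ∏ j ∈ Finset.univ.filter (fun j : Fin ℓ => j ≠ z), x (i j) ^ 2)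
      = fun x => ∏ c, x c ^ e0 z i c from funext (termP_eq z i)]
  exact integrable_monomial n _

lemma memℒp_P : MemLp (Pfun z (n := n)) 2 (stdGaussianPi n) := by
  unfold Pfun
  apply memLp_finset_sum
  intro i _
  rw [show (fun x : Fin n → ℝ =>
      x (i z) * ∏ j ∈ Finset.univ.filter (fun j : Fin ℓ => j ≠ z), x (i j) ^ 2)
      = fun x => ∏ c, x c ^ e0 z i c from funext (termP_eq z i)]
  exact memℒp_monomial _

lemma memℒp_S : MemLp (Sfun (n := n)) 2 (stdGaussianPi n) := by
  unfold Sfun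
  apply memLp_finset_sum
  intro k _
  refine (memLp_two_iff_integrable_sq (measurable_pi_apply k).aestronglyMeasurable).2 ?_
  rw [show (fun x : Fin n → ℝ => x k ^ 2) =
    fun x => ∏ c, x c ^ (if c = k then 2 else 0) from funext fun x => pow_single x k 2]
  exact integrable_monomial n _

lemma integral_P : ∫ x, Pfun z x ∂(stdGaussianPi n) = 0 := by
  unfold Pfun
  rw [integral_finset_sum _ (fun i _ => integrable_term z i)]
  exact Finset.sum_eq_zero fun i _ => integral_termP z i

lemma integral_xx (k k' : Fin n) :
    ∫ x, x k * x k' ∂(stdGaussianPi n) = if k' = k then gM 2 else 0 := by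
  have hrep : (fun x : Fin n → ℝ => x k * x k') =
      fun x => ∏ c, x c ^ ((if c = k then 1 else 0) + (if c = k' then 1 else 0)) := by
    funext x
    rw [← monomial_mul, ← pow_single x k 1, ← pow_single x k' 1, pow_one, pow_one]
  rw [hrep, integral_monomial]
  by_cases h : k' = k
  · subst h
    rw [Finset.prod_congr rfl (fun c _ => show gM ((if c = k' then 1 else 0) +
        (if c = k' then 1 else 0)) = if c = k' then gM 2 else 1 by
          by_cases hc : c = k' <;> simp [hc, gM_zero])]
    simp
  · rw [if_neg h]
    apply Finset.prod_eq_zero (Finset.mem_univ k)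
    rw [if_pos rfl, if_neg (fun hh => h hh.symm)]
    exact gM_odd odd_one

lemma integral_S_sq : ∫ x, Sfun x ^ 2 ∂(stdGaussianPi n) = n * gM 2 := by
  have hrep : (fun x : Fin n → ℝ => Sfun x ^ 2) = fun x => ∑ k, ∑ k', x k * x k' := by
    funext x
    simp only [Sfun]
    rw [sq, Finset.sum_mul_sum]
  rw [hrep, integral_finset_sum _ (fun k _ => ?hint)]
  case hint =>
    apply integrable_finset_sum
    intro k' _
    rw [show (fun x : Fin n → ℝ => x k * x k') =
      fun x => ∏ c, x c ^ ((if c = k then 1 else 0) + (if c = k' then 1 else 0)) from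
      funext fun x => by
        rw [← monomial_mul, ← pow_single x k 1, ← pow_single x k' 1, pow_one, pow_one]]
    exact integrable_monomial n _
  have : ∀ k : Fin n, ∫ x, (∑ k', x k * x k') ∂(stdGaussianPi n) = gM 2 := by
    intro k
    rw [integral_finset_sum _ (fun k' _ => ?hint2)]
    case hint2 =>
      rw [show (fun x : Fin n → ℝ => x k * x k') =
        fun x => ∏ c, x c ^ ((if c = k then 1 else 0) + (if c = k' then 1 else 0)) from
        funext fun x => by
          rw [← monomial_mul, ← pow_single x k 1, ← pow_single x k' 1, pow_one, pow_one]]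
      exact integrable_monomial n _
    rw [Finset.sum_congr rfl (fun k' _ => integral_xx k k')]
    simp
  rw [Finset.sum_congr rfl (fun k _ => this k), Finset.sum_const]
  simp [mul_comm]

lemma PS_rep : (fun x : Fin n → ℝ => Pfun z x * Sfun x) =
    fun x => ∑ i : Fin ℓ → Fin n, ∑ k, ∏ c, x c ^ eK k z i c := by
  funext x
  simp only [Pfun, Sfun]
  rw [Finset.sum_mul]
  refine Finset.sum_congr rfl fun i _ => ?_
  rw [Finset.mul_sum]
  exact Finset.sum_congr rfl fun k _ => by
    rw [mul_comm, mul_termP_eq k z i x]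

lemma integrable_PS : Integrable (fun x : Fin n → ℝ => Pfun z x * Sfun x) (stdGaussianPi n) := by
  rw [PS_rep]
  exact integrable_finset_sum _ (fun i _ => integrable_finset_sum _
    (fun k _ => integrable_monomial n _))

lemma integral_PS_ge (hℓ : 1 ≤ ℓ) :
    (n : ℝ) ^ ℓ * gM 2 ^ ℓ ≤ ∫ x, Pfun z x * Sfun x ∂(stdGaussianPi n) := by
  rw [PS_rep, integral_finset_sum _ (fun i _ => integrable_finset_sum _
    (fun k _ => integrable_monomial n _))]
  have hstep : ∀ i : Fin ℓ → Fin n,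
      (∫ x, (∑ k, ∏ c, x c ^ eK k z i c) ∂(stdGaussianPi n)) = ∏ c, gM (eK (i z) z i c) := by
    intro i
    rw [integral_finset_sum _ (fun k _ => integrable_monomial n _)]
    rw [Finset.sum_congr rfl (fun k _ => integral_monomial n _)]
    exact Finset.sum_eq_single (i z) (fun k _ hk => prod_gM_eK_off k z i hk)
      (fun h => absurd (Finset.mem_univ _) h)
  rw [Finset.sum_congr rfl (fun i _ => hstep i)]
  calc (n:ℝ)^ℓ * gM 2 ^ ℓ = ∑ _i : Fin ℓ → Fin n, gM 2 ^ ℓ := by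
        rw [Finset.sum_const, Finset.card_univ, Fintype.card_fun, nsmul_eq_mul]
        simp only [Fintype.card_fin]
        push_cast
        ring
    _ ≤ ∑ i : Fin ℓ → Fin n, ∏ c, gM (eK (i z) z i c) :=
        Finset.sum_le_sum (fun i _ => prod_gM_eK_diag hℓ z i)

end E

lemma cs_ineq {α : Type*} [MeasurableSpace α] {μ : Measure α} {f g : α → ℝ}
    (hf2 : Integrable (fun x => f x ^ 2) μ) (hg2 : Integrable (fun x => g x ^ 2) μ)
    (hfg : Integrable (fun x => f x * g x) μ) :
    (∫ x, f x * g x ∂μ) ^ 2 ≤ (∫ x, f x ^ 2 ∂μ) * ∫ x, g x ^ 2 ∂μ := by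
  set A := ∫ x, f x ^ 2 ∂μ with hA
  set B := ∫ x, g x ^ 2 ∂μ with hB
  set C := ∫ x, f x * g x ∂μ with hC
  have hexp : ∫ x, (B * f x - C * g x) ^ 2 ∂μ = B^2 * A - 2*(B*C)*C + C^2 * B := by
    have h1 : (fun x => (B * f x - C * g x) ^ 2) =
        fun x => B^2 * (f x^2) - (2*(B*C)) * (f x * g x) + C^2 * (g x^2) := by
      funext x; ring
    rw [h1]
    have e1 := integral_add (μ := μ)
      (f := fun x => B^2 * (f x^2) - (2*(B*C)) * (f x * g x)) (g := fun x => C^2 * (g x^2))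
      ((hf2.const_mul _).sub (hfg.const_mul _)) (hg2.const_mul _)
    have e2 := integral_sub (μ := μ)
      (f := fun x => B^2 * (f x^2)) (g := fun x => (2*(B*C)) * (f x * g x))
      (hf2.const_mul _) (hfg.const_mul _)
    rw [e1, e2]
    simp only [integral_const_mul]
    rfl
  have h0 : 0 ≤ B^2 * A - 2*(B*C)*C + C^2 * B := by
    rw [← hexp]; exact integral_nonneg fun x => sq_nonneg _
  have hBnn : 0 ≤ B := integral_nonneg fun x => sq_nonneg _
  rcases eq_or_lt_of_le hBnn with h | h
  · -- B = 0 : show C = 0 via ae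
    have hg0 := (integral_eq_zero_iff_of_nonneg (fun x => sq_nonneg (g x)) hg2).1 h.symm
    have hC0 : C = 0 := by
      rw [hC]
      apply integral_eq_zero_of_ae
      filter_upwards [hg0] with x hx
      have hgx : g x = 0 := by
        have : g x ^ 2 = 0 := by simpa using hx
        exact pow_eq_zero_iff (two_ne_zero) |>.1 this
      simp [hgx]
    have hAnn : 0 ≤ A := integral_nonneg fun x => sq_nonneg _
    nlinarith
  · nlinarith

/-- for odd `d = 2ℓ−1`, the degree-`d` polynomial
`q(x) = n^{-ℓ/2} Σ_{i₁,…,i_ℓ} x_{i₁} x_{i₂}² ⋯ x_{i_ℓ}²` has variance `Ω(n^{ℓ-1})`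
under the standard Gaussian on `ℝⁿ` (as `n → ∞`, with `ℓ` fixed). -/
theorem stmt6 (ℓ : ℕ) (hℓ : 1 ≤ ℓ) :
    ∃ c : ℝ, 0 < c ∧ ∃ N : ℕ, ∀ n ≥ N,
      variance
        (fun x : Fin n → ℝ => (n : ℝ) ^ (-(ℓ : ℝ) / 2) *
          ∑ i : Fin ℓ → Fin n,
            (x (i ⟨0, hℓ⟩) * ∏ j ∈ Finset.univ.filter (fun j : Fin ℓ => j ≠ ⟨0, hℓ⟩),
              x (i j) ^ 2))
        (stdGaussianPi n)
      ≥ c * (n : ℝ) ^ (ℓ - 1) := by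
  obtain ⟨m, rfl⟩ : ∃ m, ℓ = m + 1 := ⟨ℓ - 1, by omega⟩
  refine ⟨gM 2 ^ (2 * (m + 1) - 1), pow_pos gM_two_pos _, 1, fun n hn => ?_⟩
  have hnp : (0 : ℝ) < n := Nat.cast_pos.2 (by omega)
  set z : Fin (m + 1) := ⟨0, hℓ⟩ with hz
  set a : ℝ := (n : ℝ) ^ (-((m + 1 : ℕ) : ℝ) / 2) with ha
  show variance (fun x => a * Pfun z x) (stdGaussianPi n)
      ≥ gM 2 ^ (2 * (m + 1) - 1) * (n : ℝ) ^ (m + 1 - 1)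
  have hmem : MemLp (fun x => a * Pfun z x) 2 (stdGaussianPi n) := (memℒp_P z).const_mul a
  rw [variance_eq_sub hmem]
  have hEX : ∫ x, a * Pfun z x ∂(stdGaussianPi n) = 0 := by
    rw [integral_const_mul, integral_P]
    ring
  have hsq : (fun x : Fin n → ℝ => a * Pfun z x) ^ 2 = fun x => a ^ 2 * Pfun z x ^ 2 := by
    funext x
    simp [Pi.pow_apply]
    ring
  rw [hsq]
  simp only [hEX]
  rw [integral_const_mul]
  -- now goal : a^2 * ∫ P² - 0^2 ≥ G^(2m+1) * n^m
  set G := gM 2 with hG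
  set IP2 := ∫ x, Pfun z x ^ 2 ∂(stdGaussianPi n) with hIP2
  set C := ∫ x, Pfun z x * Sfun x ∂(stdGaussianPi n) with hC
  have hcs : C ^ 2 ≤ IP2 * ((n : ℝ) * G) := by
    have := cs_ineq (μ := stdGaussianPi n) (f := Pfun z (n := n)) (g := Sfun (n := n))
      (memℒp_P z).integrable_sq memℒp_S.integrable_sq (integrable_PS z)
    rwa [integral_S_sq] at this
  have hD : (n : ℝ) ^ (m + 1) * G ^ (m + 1) ≤ C := integral_PS_ge z hℓ
  have hDnn : (0 : ℝ) ≤ (n : ℝ) ^ (m + 1) * G ^ (m + 1) :=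
    mul_nonneg (by positivity) (pow_nonneg gM_two_pos.le _)
  have hC2 : ((n : ℝ) ^ (m + 1) * G ^ (m + 1)) ^ 2 ≤ C ^ 2 := by nlinarith
  have hBpos : (0 : ℝ) < (n : ℝ) * G := mul_pos hnp gM_two_pos
  have ha2 : a ^ 2 * ((n : ℝ) ^ (m + 1)) ^ 2 = (n : ℝ) ^ (m + 1) := by
    rw [ha, ← Real.rpow_natCast ((n : ℝ) ^ (-((m + 1 : ℕ) : ℝ) / 2)) 2,
      ← Real.rpow_mul hnp.le, ← pow_mul, ← Real.rpow_natCast (n : ℝ) ((m + 1) * 2),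
      ← Real.rpow_add hnp]
    rw [show -((m + 1 : ℕ) : ℝ) / 2 * ((2 : ℕ) : ℝ) + (((m + 1) * 2 : ℕ) : ℝ) = ((m + 1 : ℕ) : ℝ) by
      push_cast; ring]
    rw [Real.rpow_natCast]
  have key : a ^ 2 * ((n : ℝ) ^ (m + 1) * G ^ (m + 1)) ^ 2
      = (G ^ (2 * (m + 1) - 1) * (n : ℝ) ^ (m + 1 - 1)) * ((n : ℝ) * G) := by
    have h1 : ((n : ℝ) ^ (m + 1) * G ^ (m + 1)) ^ 2
        = ((n : ℝ) ^ (m + 1)) ^ 2 * G ^ (2 * (m + 1)) := by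
      rw [mul_pow, ← pow_mul, ← pow_mul, mul_comm (m + 1) 2]
    rw [h1, ← mul_assoc, ha2]
    rw [show m + 1 - 1 = m from rfl, show 2 * (m + 1) - 1 = 2 * m + 1 by omega,
      show 2 * (m + 1) = (2 * m + 1) + 1 by omega, pow_succ, pow_succ]
    ring
  have hanonneg : (0 : ℝ) ≤ a ^ 2 := sq_nonneg a
  have hmain : (G ^ (2 * (m + 1) - 1) * (n : ℝ) ^ (m + 1 - 1)) * ((n : ℝ) * G)
      ≤ (a ^ 2 * IP2) * ((n : ℝ) * G) := by
    calc (G ^ (2 * (m + 1) - 1) * (n : ℝ) ^ (m + 1 - 1)) * ((n : ℝ) * G)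
        = a ^ 2 * ((n : ℝ) ^ (m + 1) * G ^ (m + 1)) ^ 2 := key.symm
      _ ≤ a ^ 2 * C ^ 2 := by nlinarith
      _ ≤ a ^ 2 * (IP2 * ((n : ℝ) * G)) := by nlinarith
      _ = (a ^ 2 * IP2) * ((n : ℝ) * G) := by ring
  have := (mul_le_mul_iff_of_pos_right hBpos).1 hmain
  calc a ^ 2 * IP2 - 0 ^ 2 = a ^ 2 * IP2 := by ring
    _ ≥ G ^ (2 * (m + 1) - 1) * (n : ℝ) ^ (m + 1 - 1) := this
end

section
/- Let d ∈ ℕ, let w be a standard Gaussian vector in ℝⁿ, let P(x) = x^{⊗d} ∈ Sym((ℝⁿ)^{⊗d}), and let Σ = Cov(P(w)). Then the minimal eigenvalue of Σ satisfies λ_min(Σ) ≥ 1/d!. -/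
open MeasureTheory ProbabilityTheory

section Aux
open Polynomial Real Filter

noncomputable def gam : Measure ℝ := gaussianReal 0 1

lemma pdf01 (x : ℝ) : gaussianPDFReal 0 1 x = (Real.sqrt (2*Real.pi))⁻¹ * Real.exp (-(1/2) * x^2) := by
  simp only [gaussianPDFReal, NNReal.coe_one, mul_one, sub_zero]
  ring_nf

lemma integrable_monomial_exp (k : ℕ) :
    Integrable (fun t : ℝ => t ^ k * Real.exp (-(1/2) * t^2)) volume := by
  have h := integrable_rpow_mul_exp_neg_mul_sq (b := 1/2) (by norm_num)
    (s := (k:ℝ)) (by exact_mod_cast neg_one_lt_zero.trans_le (Nat.cast_nonneg k))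
  simpa [Real.rpow_natCast] using h

lemma integrable_poly_pdf (p : ℝ[X]) :
    Integrable (fun t => eval t p * gaussianPDFReal 0 1 t) volume := by
  have : (fun t => eval t p * gaussianPDFReal 0 1 t) =
      fun t => ∑ k ∈ Finset.range (p.natDegree + 1),
        (p.coeff k * (Real.sqrt (2*Real.pi))⁻¹) * (t ^ k * Real.exp (-(1/2) * t^2)) := by
    funext t
    rw [eval_eq_sum_range, Finset.sum_mul, pdf01]
    refine Finset.sum_congr rfl fun k _ => by ring
  rw [this]
  exact integrable_finset_sum _ fun k _ => (integrable_monomial_exp k).const_mul _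

lemma gam_eq : gam = volume.withDensity (fun x => ((gaussianPDFReal 0 1 x).toNNReal : ENNReal)) := by
  rw [gam, gaussianReal_of_var_ne_zero _ one_ne_zero]
  rfl

lemma integrable_gam_poly (p : ℝ[X]) : Integrable (fun t => eval t p) gam := by
  rw [gam_eq, integrable_withDensity_iff]
  · apply (integrable_poly_pdf p).congr
    filter_upwards with t
    rw [ENNReal.coe_toReal, Real.coe_toNNReal _ (gaussianPDFReal_nonneg _ _ _)]
  · exact (measurable_gaussianPDFReal 0 1).real_toNNReal.coe_nnreal_ennreal
  · filter_upwards with t using ENNReal.coe_lt_top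

lemma integral_gam_eq (g : ℝ → ℝ) :
    ∫ t, g t ∂gam = ∫ t, gaussianPDFReal 0 1 t * g t := by
  rw [gam_eq, integral_withDensity_eq_integral_smul
    (measurable_gaussianPDFReal 0 1).real_toNNReal g]
  congr 1; funext t
  rw [NNReal.smul_def, smul_eq_mul, Real.coe_toNNReal _ (gaussianPDFReal_nonneg _ _ _)]

lemma tendsto_poly_gauss_atTop (p : ℝ[X]) :
    Tendsto (fun t => eval t p * Real.exp (-(1/2) * t^2)) atTop (nhds 0) := by
  have h1 : Tendsto (fun t => eval t p / Real.exp t) atTop (nhds 0) :=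
    p.tendsto_div_exp_atTop
  have key : ∀ t : ℝ, eval t p * Real.exp (-(1/2) * t^2)
      = (eval t p / Real.exp t) * Real.exp (t - (1/2) * t^2) := by
    intro t
    rw [div_mul_eq_mul_div, mul_div_assoc, ← Real.exp_sub]
    ring_nf
  simp only [key]
  rw [show (0:ℝ) = 0 * 0 by ring]
  apply h1.mul
  have h2 : Tendsto (fun t : ℝ => t - (1/2) * t^2) atTop atBot := by
    refine tendsto_atBot_mono' atTop ?_
      (tendsto_atBot_add_const_right _ (2:ℝ) tendsto_neg_atTop_atBot)
    filter_upwards [eventually_ge_atTop (4:ℝ)] with t ht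
    nlinarith
  exact Real.tendsto_exp_atBot.comp h2

lemma tendsto_poly_gauss_atBot (p : ℝ[X]) :
    Tendsto (fun t => eval t p * Real.exp (-(1/2) * t^2)) atBot (nhds 0) := by
  have h := tendsto_poly_gauss_atTop (p.comp (-X))
  have h2 := h.comp tendsto_neg_atBot_atTop
  apply h2.congr
  intro t
  simp [Function.comp, eval_comp]

lemma hasDerivAt_F (p : ℝ[X]) (t : ℝ) :
    HasDerivAt (fun t => eval t p * gaussianPDFReal 0 1 t)
      ((eval t (derivative p) - t * eval t p) * gaussianPDFReal 0 1 t) t := by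
  have hexp : HasDerivAt (fun t : ℝ => Real.exp (-(1/2) * t^2))
      (-t * Real.exp (-(1/2) * t^2)) t := by
    have h1 : HasDerivAt (fun t : ℝ => -(1/2) * t^2) (-t) t := by
      have := (hasDerivAt_pow 2 t).const_mul (-(1/2) : ℝ)
      simpa using this.congr_deriv (by ring)
    simpa [mul_comm] using h1.exp
  have hp : HasDerivAt (fun x => eval x p) (eval t (derivative p)) t := p.hasDerivAt t
  have := (hp.mul hexp).const_mul ((Real.sqrt (2*Real.pi))⁻¹)
  have heq : (fun t => eval t p * gaussianPDFReal 0 1 t)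
      = fun t => (Real.sqrt (2*Real.pi))⁻¹ * (eval t p * Real.exp (-(1/2) * t^2)) := by
    funext s; rw [pdf01]; ring
  rw [heq, pdf01]
  exact this.congr_deriv (by ring)

lemma integral_Fderiv (p : ℝ[X]) :
    ∫ t, (eval t (derivative p) - t * eval t p) * gaussianPDFReal 0 1 t = 0 := by
  set F := fun t => eval t p * gaussianPDFReal 0 1 t with hF
  set F' := fun t => (eval t (derivative p) - t * eval t p) * gaussianPDFReal 0 1 t with hF'
  have hderiv : ∀ t : ℝ, HasDerivAt F (F' t) t := hasDerivAt_F p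
  have hint : Integrable F' volume := by
    have : F' = fun t => eval t (derivative p - X * p) * gaussianPDFReal 0 1 t := by
      funext t; simp [hF', eval_sub, eval_mul]
    rw [this]; exact integrable_poly_pdf _
  have htop : Tendsto F atTop (nhds 0) := by
    have := (tendsto_poly_gauss_atTop p).const_mul ((Real.sqrt (2*Real.pi))⁻¹)
    simp only [mul_zero] at this
    apply this.congr; intro t; simp only [hF, pdf01]; ring
  have hbot : Tendsto F atBot (nhds 0) := by
    have := (tendsto_poly_gauss_atBot p).const_mul ((Real.sqrt (2*Real.pi))⁻¹)
    simp only [mul_zero] at this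
    apply this.congr; intro t; simp only [hF, pdf01]; ring
  have h1 : ∫ t in Set.Iic 0, F' t = F 0 - 0 :=
    MeasureTheory.integral_Iic_of_hasDerivAt_of_tendsto
      (hderiv 0).continuousAt.continuousWithinAt
      (fun x _ => hderiv x) hint.integrableOn hbot
  have h2 : ∫ t in Set.Ioi 0, F' t = 0 - F 0 :=
    MeasureTheory.integral_Ioi_of_hasDerivAt_of_tendsto
      (hderiv 0).continuousAt.continuousWithinAt
      (fun x _ => hderiv x) hint.integrableOn htop
  have h3 := intervalIntegral.integral_Iic_add_Ioi (b := 0)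
    hint.integrableOn hint.integrableOn
  rw [h1, h2] at h3
  linarith [h3]

lemma stein (p : ℝ[X]) :
    ∫ t, t * eval t p ∂gam = ∫ t, eval t (derivative p) ∂gam := by
  have hL : Integrable (fun t => t * eval t p) gam := by
    have := integrable_gam_poly (X * p)
    simpa [eval_mul] using this
  have hR := integrable_gam_poly (derivative p)
  rw [integral_gam_eq, integral_gam_eq]
  have hL' : Integrable (fun t => gaussianPDFReal 0 1 t * (t * eval t p)) volume := by
    have := integrable_poly_pdf (X * p)
    apply this.congr; filter_upwards with t; simp [eval_mul]; ring
  have hR' : Integrable (fun t => gaussianPDFReal 0 1 t * eval t (derivative p)) volume := by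
    have := integrable_poly_pdf (derivative p)
    apply this.congr; filter_upwards with t; ring
  have key := integral_Fderiv p
  have : ∫ t, (gaussianPDFReal 0 1 t * eval t (derivative p)
      - gaussianPDFReal 0 1 t * (t * eval t p)) = 0 := by
    calc ∫ t, (gaussianPDFReal 0 1 t * eval t (derivative p)
        - gaussianPDFReal 0 1 t * (t * eval t p))
        = ∫ t, (eval t (derivative p) - t * eval t p) * gaussianPDFReal 0 1 t := by
          congr 1; funext t; ring
      _ = 0 := key
  rw [integral_sub hR' hL'] at this
  linarith

noncomputable def hr (m : ℕ) : ℝ[X] := (hermite m).map (Int.castRingHom ℝ)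

lemma hr_zero : hr 0 = 1 := by simp [hr]

lemma hr_succ (m : ℕ) : hr (m + 1) = X * hr m - derivative (hr m) := by
  simp [hr, hermite_succ, Polynomial.map_sub, Polynomial.map_mul,
    derivative_map]

lemma hr_natDegree (m : ℕ) : (hr m).natDegree = m := by
  rw [hr, (hermite_monic m).natDegree_map, natDegree_hermite]

lemma hr_coeff_self (m : ℕ) : (hr m).coeff m = 1 := by
  simp [hr, coeff_map, coeff_hermite_self]

noncomputable def Jv (k m : ℕ) : ℝ := ∫ t, eval t (X^k * hr m) ∂gam

instance : IsProbabilityMeasure gam :=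
  inferInstanceAs (IsProbabilityMeasure (gaussianReal 0 1))

lemma Jv_zero_zero : Jv 0 0 = 1 := by
  simp [Jv, hr_zero]

lemma Jv_rec (k m : ℕ) : Jv k (m + 1) = k * Jv (k - 1) m := by
  have h1 : Jv k (m+1) = ∫ t, (t * eval t (X^k * hr m)
      - eval t (X^k * derivative (hr m))) ∂gam := by
    rw [Jv]
    congr 1; funext t
    rw [hr_succ]
    simp only [eval_mul, eval_sub, eval_pow, eval_X]
    ring
  have hInt1 : Integrable (fun t => t * eval t (X^k * hr m)) gam := by
    have := integrable_gam_poly (X * (X^k * hr m))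
    apply this.congr; filter_upwards with t; simp [eval_mul]
  have hInt2 : Integrable (fun t => eval t (X^k * derivative (hr m))) gam :=
    integrable_gam_poly _
  rw [h1, integral_sub hInt1 hInt2, stein (X^k * hr m)]
  have h2 : ∫ t, eval t (derivative (X^k * hr m)) ∂gam
      - ∫ t, eval t (X^k * derivative (hr m)) ∂gam
      = ∫ t, eval t (derivative (X^k * hr m) - X^k * derivative (hr m)) ∂gam := by
    rw [← integral_sub (integrable_gam_poly _) (integrable_gam_poly _)]
    congr 1; funext t; simp [eval_sub]
  rw [h2]
  have h3 : derivative (X^k * hr m) - X^k * derivative (hr m)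
      = C (k:ℝ) * (X^(k-1) * hr m) := by
    rw [derivative_mul, derivative_X_pow]
    ring
  rw [h3]
  have : (fun t => eval t (C (k:ℝ) * (X^(k-1) * hr m)))
      = fun t => (k:ℝ) * eval t (X^(k-1) * hr m) := by
    funext t; simp [eval_mul]
  rw [this, integral_const_mul, Jv]

lemma Jv_lt : ∀ m k, k < m → Jv k m = 0 := by
  intro m
  induction m with
  | zero => intro k h; omega
  | succ m ih =>
    intro k h
    rw [Jv_rec]
    rcases Nat.eq_zero_or_pos k with rfl | hk
    · simp
    · rw [ih (k-1) (by omega), mul_zero]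

lemma Jv_diag (m : ℕ) : Jv m m = m.factorial := by
  induction m with
  | zero => simpa using Jv_zero_zero
  | succ m ih => rw [Jv_rec, Nat.succ_sub_one, ih, Nat.factorial_succ]; push_cast; ring

def GR : Type := ℝ

instance : MeasurableSpace GR := inferInstanceAs (MeasurableSpace ℝ)
noncomputable instance : MeasureSpace GR := ⟨gam⟩
instance : IsProbabilityMeasure (volume : Measure GR) :=
  inferInstanceAs (IsProbabilityMeasure gam)

noncomputable def stdG (n : ℕ) : Measure (Fin n → ℝ) := Measure.pi fun _ => gam

lemma integrable_prod_poly (n : ℕ) (P : Fin n → ℝ[X]) :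
    Integrable (fun x : Fin n → ℝ => ∏ i, eval (x i) (P i)) (stdG n) :=
  MeasureTheory.Integrable.fintype_prod (E := ℝ) (𝕜 := ℝ)
    (f := fun i (t : ℝ) => eval (show ℝ from t) (P i)) (fun i => integrable_gam_poly (P i))

lemma integral_prod_poly (n : ℕ) (P : Fin n → ℝ[X]) :
    ∫ x, ∏ i, eval (x i) (P i) ∂(stdG n) = ∏ i, ∫ t, eval t (P i) ∂gam :=
  MeasureTheory.integral_fintype_prod_eq_prod (E := fun _ => ℝ) (𝕜 := ℝ)
    (f := fun i (t : ℝ) => eval (show ℝ from t) (P i))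

lemma herm_pair_le {a b : ℕ} (hba : b ≤ a) :
    ∫ t, eval t (hr a * hr b) ∂gam = if a = b then (a.factorial : ℝ) else 0 := by
  have hexp : ∀ t : ℝ, eval t (hr a * hr b)
      = ∑ k ∈ Finset.range (b + 1), (hr b).coeff k * eval t (X^k * hr a) := by
    intro t
    rw [eval_mul, mul_comm, eval_eq_sum_range, hr_natDegree, Finset.sum_mul]
    refine Finset.sum_congr rfl fun k _ => ?_
    simp [eval_mul]
    ring
  calc ∫ t, eval t (hr a * hr b) ∂gam
      = ∑ k ∈ Finset.range (b + 1), (hr b).coeff k * ∫ t, eval t (X^k * hr a) ∂gam := by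
        rw [show (fun t => eval t (hr a * hr b)) = fun t => ∑ k ∈ Finset.range (b + 1),
          (hr b).coeff k * eval t (X^k * hr a) from funext hexp]
        rw [integral_finset_sum _ fun k _ => (integrable_gam_poly _).const_mul _]
        exact Finset.sum_congr rfl fun k _ => integral_const_mul _ _
    _ = ∑ k ∈ Finset.range (b + 1), (hr b).coeff k * Jv k a := rfl
    _ = if a = b then (a.factorial : ℝ) else 0 := by
        rcases eq_or_lt_of_le hba with rfl | hlt
        · rw [if_pos rfl, Finset.sum_eq_single b]
          · rw [hr_coeff_self, Jv_diag, one_mul]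
          · intro k hk hne
            rw [Jv_lt b k (lt_of_le_of_ne (Nat.lt_succ_iff.mp (Finset.mem_range.mp hk)) hne),
              mul_zero]
          · intro h; exact absurd (Finset.self_mem_range_succ b) h
        · rw [if_neg (by omega)]
          apply Finset.sum_eq_zero
          intro k hk
          rw [Jv_lt a k (by have := Finset.mem_range.mp hk; omega), mul_zero]

lemma herm_pair (a b : ℕ) :
    ∫ t, eval t (hr a * hr b) ∂gam = if a = b then (a.factorial : ℝ) else 0 := by
  rcases le_total b a with h | h
  · exact herm_pair_le h
  · rw [mul_comm]
    rw [herm_pair_le h]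
    by_cases hab : a = b
    · subst hab; simp
    · rw [if_neg (Ne.symm hab), if_neg hab]

lemma mono_herm_pair (k m : ℕ) :
    ∫ t, eval t (X^k * hr m) ∂gam = Jv k m := rfl

lemma herm_mean {m : ℕ} (hm : 1 ≤ m) : ∫ t, eval t (hr m) ∂gam = 0 := by
  have := Jv_lt m 0 hm
  rw [Jv] at this
  simpa using this

lemma form_integrable {n : ℕ} {ι : Type*} (S : Finset ι) (a : ι → ℝ)
    (P : ι → Fin n → ℝ[X]) :
    Integrable (fun x : Fin n → ℝ => ∑ k ∈ S, a k * ∏ i, eval (x i) (P k i)) (stdG n) :=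
  integrable_finset_sum S fun k _ => (integrable_prod_poly n (P k)).const_mul _

lemma form_integral {n : ℕ} {ι : Type*} (S : Finset ι) (a : ι → ℝ)
    (P : ι → Fin n → ℝ[X]) :
    ∫ x, (∑ k ∈ S, a k * ∏ i, eval (x i) (P k i)) ∂(stdG n)
      = ∑ k ∈ S, a k * ∏ i, ∫ t, eval t (P k i) ∂gam := by
  rw [integral_finset_sum S fun k _ => (integrable_prod_poly n (P k)).const_mul _]
  exact Finset.sum_congr rfl fun k _ => by rw [integral_const_mul, integral_prod_poly]

lemma form_mul {n : ℕ} {ι : Type*} (S S' : Finset ι) (a b : ι → ℝ)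
    (P Q : ι → Fin n → ℝ[X]) (x : Fin n → ℝ) :
    (∑ k ∈ S, a k * ∏ i, eval (x i) (P k i)) * (∑ l ∈ S', b l * ∏ i, eval (x i) (Q l i))
      = ∑ p ∈ S ×ˢ S', (a p.1 * b p.2) * ∏ i, eval (x i) (P p.1 i * Q p.2 i) := by
  rw [Finset.sum_mul_sum, Finset.sum_product]
  refine Finset.sum_congr rfl fun k _ => Finset.sum_congr rfl fun l _ => ?_
  simp only [eval_mul, Finset.prod_mul_distrib]
  ring

lemma exists_lt_of_ne {n : ℕ} {I J : Fin n → ℕ} (h : ∑ i, I i = ∑ i, J i)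
    (hne : I ≠ J) : ∃ i, I i < J i := by
  by_contra hc
  push_neg at hc
  refine hne (funext fun i => ?_)
  have := (Finset.sum_eq_sum_iff_of_le (fun i _ => hc i)).mp h.symm i (Finset.mem_univ i)
  omega

lemma sum_offdiag {n : ℕ} {T : Finset (Fin n → ℕ)} (F : (Fin n → ℕ) → (Fin n → ℕ) → ℝ)
    (hF : ∀ I ∈ T, ∀ J ∈ T, J ≠ I → F I J = 0) :
    ∑ p ∈ T ×ˢ T, F p.1 p.2 = ∑ I ∈ T, F I I := by
  rw [Finset.sum_product]
  refine Finset.sum_congr rfl fun I hI => ?_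
  exact Finset.sum_eq_single I (fun J hJ hne => hF I hI J hJ hne)
    (fun h => absurd hI h)

/-- the minimal eigenvalue of `Σ = Cov(w^{⊗d})` is at least `1/d!`.
Equivalently (expressing a unit vector of `Sym((ℝⁿ)^{⊗d})` in the orthonormal basis
`{e_I}_{I ∈ MI_n(d)}`): for every homogeneous degree-`d` polynomial
`q(x) = Σ_{I ∈ MI_n(d)} v_I x^I` with `Σ_I v_I² = 1`, one has
`Var(q(w)) = ⟨v, Σ v⟩ ≥ 1/d!` for `w` standard Gaussian in `ℝⁿ`. -/
theorem stmt7 (n d : ℕ) (hn : 1 ≤ n) (hd : 1 ≤ d)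
    (v : (Fin n → ℕ) → ℝ)
    (hv : ∑ I ∈ Finset.Nat.antidiagonalTuple n d, v I ^ 2 = 1) :
    (1 : ℝ) / d.factorial ≤
      variance
        (fun x : Fin n → ℝ =>
          ∑ I ∈ Finset.Nat.antidiagonalTuple n d, v I * ∏ i, x i ^ I i)
        (stdGaussianPi n) := by
  classical
  set T := Finset.Nat.antidiagonalTuple n d with hT
  have hmemT : ∀ I ∈ T, ∑ i, I i = d := fun I hI =>
    Finset.Nat.mem_antidiagonalTuple.mp hI
  set μ := stdG n with hμ
  haveI hprob : IsProbabilityMeasure μ := by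
    rw [hμ, stdG]; infer_instance
  set q : (Fin n → ℝ) → ℝ := fun x => ∑ I ∈ T, v I * ∏ i, eval (x i) (X ^ I i : ℝ[X])
    with hq
  set g : (Fin n → ℝ) → ℝ := fun x => ∑ I ∈ T, v I * ∏ i, eval (x i) (hr (I i)) with hg
  set A : ℝ := ∑ I ∈ T, v I ^ 2 * ∏ i, ((I i).factorial : ℝ) with hA
  -- the statement's function is q, the statement's measure is μ
  have hfun : (fun x : Fin n → ℝ => ∑ I ∈ T, v I * ∏ i, x i ^ I i) = q := by
    funext x
    simp [hq, eval_pow, eval_X]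
  rw [show stdGaussianPi n = μ from rfl, hfun]
  -- integrability
  have hq_int : Integrable q μ := form_integrable T v _
  have hg_int : Integrable g μ := form_integrable T v _
  have hqq_eq : ∀ x, q x * q x = ∑ p ∈ T ×ˢ T,
      (v p.1 * v p.2) * ∏ i, eval (x i) ((X ^ p.1 i : ℝ[X]) * (X ^ p.2 i)) :=
    fun x => form_mul T T v v _ _ x
  have hqg_eq : ∀ x, q x * g x = ∑ p ∈ T ×ˢ T,
      (v p.1 * v p.2) * ∏ i, eval (x i) ((X ^ p.1 i : ℝ[X]) * hr (p.2 i)) :=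
    fun x => form_mul T T v v _ _ x
  have hgg_eq : ∀ x, g x * g x = ∑ p ∈ T ×ˢ T,
      (v p.1 * v p.2) * ∏ i, eval (x i) (hr (p.1 i) * hr (p.2 i)) :=
    fun x => form_mul T T v v _ _ x
  have hqq_int : Integrable (fun x => q x * q x) μ := by
    rw [show (fun x => q x * q x) = _ from funext hqq_eq]
    exact form_integrable _ _ _
  have hqg_int : Integrable (fun x => q x * g x) μ := by
    rw [show (fun x => q x * g x) = _ from funext hqg_eq]
    exact form_integrable _ _ _
  have hgg_int : Integrable (fun x => g x * g x) μ := by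
    rw [show (fun x => g x * g x) = _ from funext hgg_eq]
    exact form_integrable _ _ _
  -- integral values
  have hg0 : ∫ x, g x ∂μ = 0 := by
    rw [hg, form_integral]
    refine Finset.sum_eq_zero fun I hI => ?_
    obtain ⟨i, hi⟩ : ∃ i, I i ≠ 0 := by
      by_contra hc
      push_neg at hc
      have : ∑ i, I i = 0 := Finset.sum_eq_zero fun i _ => hc i
      rw [hmemT I hI] at this
      omega
    rw [Finset.prod_eq_zero (Finset.mem_univ i)
      (herm_mean (Nat.one_le_iff_ne_zero.mpr hi)), mul_zero]
  have hqgA : ∫ x, q x * g x ∂μ = A := by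
    rw [show (fun x => q x * g x) = _ from funext hqg_eq, form_integral, hA]
    rw [sum_offdiag (fun I J => (v I * v J) * ∏ i, ∫ t, eval t ((X ^ I i : ℝ[X]) * hr (J i)) ∂gam)]
    · refine Finset.sum_congr rfl fun I hI => ?_
      rw [sq]
      congr 1
      refine Finset.prod_congr rfl fun i _ => ?_
      rw [mono_herm_pair, Jv_diag]
    · intro I hI J hJ hne
      obtain ⟨i, hi⟩ := exists_lt_of_ne ((hmemT I hI).trans (hmemT J hJ).symm) (Ne.symm hne)
      rw [Finset.prod_eq_zero (Finset.mem_univ i), mul_zero]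
      rw [mono_herm_pair, Jv_lt _ _ hi]
  have hggA : ∫ x, g x * g x ∂μ = A := by
    rw [show (fun x => g x * g x) = _ from funext hgg_eq, form_integral, hA]
    rw [sum_offdiag (fun I J => (v I * v J) * ∏ i, ∫ t, eval t (hr (I i) * hr (J i)) ∂gam)]
    · refine Finset.sum_congr rfl fun I hI => ?_
      rw [sq]
      congr 1
      refine Finset.prod_congr rfl fun i _ => ?_
      rw [herm_pair, if_pos rfl]
    · intro I hI J hJ hne
      obtain ⟨i, hi⟩ : ∃ i, I i ≠ J i := by
        by_contra hc
        push_neg at hc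
        exact hne (funext fun i => (hc i).symm)
      rw [Finset.prod_eq_zero (Finset.mem_univ i), mul_zero]
      rw [herm_pair, if_neg hi]
  -- Memℒp and variance formula
  have hq_cont : Continuous q := by
    refine continuous_finset_sum _ fun I _ => Continuous.mul continuous_const ?_
    exact continuous_finset_prod _ fun i _ =>
      (Polynomial.continuous _).comp (continuous_apply i)
  have hq2 : MemLp q 2 μ := by
    refine (memLp_two_iff_integrable_sq hq_cont.aestronglyMeasurable).mpr ?_
    rw [show (fun x => q x ^ 2) = fun x => q x * q x from funext fun x => sq (q x)]
    exact hqq_int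
  have hvar : variance q μ = (∫ x, q x * q x ∂μ) - (∫ x, q x ∂μ) ^ 2 := by
    rw [variance_eq_sub hq2]
    congr 1
    · congr 1; funext x; simp [sq]
  set c := ∫ x, q x ∂μ with hc
  -- expansion of the square
  have expand : ∫ x, (q x - c - g x) ^ 2 ∂μ = (∫ x, q x * q x ∂μ) - c ^ 2 - A := by
    have hpt : (fun x => (q x - c - g x) ^ 2)
        = fun x => ((q x * q x + g x * g x + c ^ 2)
          - (2 * c * q x + 2 * (q x * g x))) + 2 * c * g x :=
      funext fun x => by ring
    have hf1 : Integrable (fun x => q x * q x + g x * g x + c ^ 2) μ :=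
      (hqq_int.add hgg_int).add (integrable_const _)
    have hf2 : Integrable (fun x => 2 * c * q x + 2 * (q x * g x)) μ :=
      (hq_int.const_mul _).add (hqg_int.const_mul _)
    have hf3 : Integrable (fun x => 2 * c * g x) μ := hg_int.const_mul _
    have hf12 : Integrable (fun x => (q x * q x + g x * g x + c ^ 2)
        - (2 * c * q x + 2 * (q x * g x))) μ := hf1.sub hf2
    have ha1 : Integrable (fun x => q x * q x + g x * g x) μ := hqq_int.add hgg_int
    have ha2 : Integrable (fun x => 2 * c * q x) μ := hq_int.const_mul _
    have ha3 : Integrable (fun x => 2 * (q x * g x)) μ := hqg_int.const_mul _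
    rw [hpt, integral_add hf12 hf3]
    rw [integral_sub hf1 hf2,
      integral_add ha1 (integrable_const (c ^ 2)),
      integral_add hqq_int hgg_int,
      integral_add ha2 ha3,
      integral_const_mul, integral_const_mul, integral_const_mul,
      hggA, hqgA, hg0, ← hc, integral_const]
    simp [measure_univ]
    ring
  have hnonneg : 0 ≤ ∫ x, (q x - c - g x) ^ 2 ∂μ :=
    integral_nonneg fun x => sq_nonneg _
  have hAvar : A ≤ variance q μ := by
    rw [hvar]
    linarith [expand ▸ hnonneg]
  -- A ≥ 1 ≥ 1/d!
  have hA1 : (1 : ℝ) ≤ A := by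
    rw [← hv, hA]
    refine Finset.sum_le_sum fun I _ => ?_
    have h1 : (1 : ℝ) ≤ ∏ i, ((I i).factorial : ℝ) := by
      rw [← Nat.cast_prod]
      exact Nat.one_le_cast.mpr (Finset.one_le_prod' fun i _ =>
        Nat.one_le_iff_ne_zero.mpr (Nat.factorial_ne_zero _))
    nlinarith [sq_nonneg (v I)]
  have hd1 : (1 : ℝ) / d.factorial ≤ 1 := by
    rw [div_le_one (by positivity)]
    exact_mod_cast d.factorial_pos
  linarith

end Aux
end

section
/- Let h_m denote the m-th normalized (probabilist's) Hermite polynomial, h_m(x) = ((−1)^m/√m!) e^{x²/2} (d^m/dx^m) e^{−x²/2}, and write h_m explicitly as h_m(x) = √m! Σ_{j=0}^{⌊m/2⌋} (−1)^j x^{m−2j}/(j!(m−2j)!2^j). Let p_d = Σ_{m=0}^d ĉ_m h_m with |ĉ_m| ≤ M for all m, and write p_d(x) = Σ_{m=0}^d a_m x^m in the monomial basis. Then |a_m| ≤ M · (2/√m!) · 2^d for every 0 ≤ m ≤ d. -/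
/-- The `m`-th normalized (probabilist's) Hermite polynomial `h_m = He_m / √(m!)`,
so that `{h_m}` is orthonormal in `L²(γ)`. -/
noncomputable def hermiteNorm (m : ℕ) : Polynomial ℝ :=
  (Real.sqrt m.factorial)⁻¹ • (Polynomial.hermite m).map (Int.castRingHom ℝ)

open scoped Nat

private lemma dfac_le_succ : ∀ n : ℕ, n‼ ≤ (n + 1)‼
  | 0 => le_refl 1
  | 1 => by norm_num [Nat.doubleFactorial]
  | n + 2 => by
    rw [Nat.doubleFactorial_add_two, show n + 2 + 1 = n + 1 + 2 from rfl,
      Nat.doubleFactorial_add_two]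
    exact Nat.mul_le_mul (by omega) (dfac_le_succ n)

private lemma sq_dfac_le (j : ℕ) : ((2 * j - 1)‼) ^ 2 ≤ (2 * j)! := by
  cases j with
  | zero => norm_num [Nat.doubleFactorial]
  | succ k =>
    have h1 : 2 * (k + 1) = 2 * k + 1 + 1 := by ring
    rw [h1, Nat.factorial_eq_mul_doubleFactorial, Nat.add_sub_cancel, sq]
    exact Nat.mul_le_mul_right _ (dfac_le_succ _)

private lemma key (i m : ℕ) :
    |((Polynomial.hermite i).coeff m : ℝ)| * Real.sqrt m.factorial
      ≤ (i.choose m : ℝ) * Real.sqrt i.factorial := by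
  rcases Nat.even_or_odd (i + m) with he | ho
  · rcases le_or_gt m i with hmi | hmi
    · obtain ⟨j, hj⟩ : ∃ j, i - m = 2 * j := by
        rw [Nat.even_add, ← Nat.even_sub hmi] at he
        exact he.exists_two_nsmul _
      have hi : i = m + 2 * j := by omega
      rw [Polynomial.coeff_hermite_of_even_add he]
      set A : ℕ := (i - m - 1)‼ * i.choose m with hA
      have habs : |(((-1 : ℤ) ^ ((i - m) / 2) * (i - m - 1)‼ * (i.choose m : ℤ) : ℤ) : ℝ)|
          = (A : ℝ) := by
        push_cast
        rw [abs_mul, abs_mul, abs_pow, abs_neg, abs_one, one_pow, one_mul,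
          abs_of_nonneg (by positivity), abs_of_nonneg (by positivity), hA]
        push_cast
        ring
      rw [habs]
      -- reduce to a Nat inequality on squares
      have hnat : A ^ 2 * m.factorial ≤ (i.choose m) ^ 2 * i.factorial := by
        have hdf : (i - m - 1)‼ ^ 2 ≤ (2 * j)! := by
          rw [hj]; exact sq_dfac_le j
        have hcf : i.choose m * (m.factorial * (2 * j)!) = i.factorial := by
          have := Nat.choose_mul_factorial_mul_factorial
            (show m ≤ i from hmi)
          rw [hj] at this
          rw [← this]; ring
        calc A ^ 2 * m.factorial
            = ((i - m - 1)‼ ^ 2) * (i.choose m ^ 2 * m.factorial) := by rw [hA]; ring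
          _ ≤ (2 * j)! * (i.choose m ^ 2 * m.factorial) :=
              Nat.mul_le_mul_right _ hdf
          _ = i.choose m * (i.choose m * (m.factorial * (2 * j)!)) := by ring
          _ = i.choose m * i.factorial := by rw [hcf]
          _ ≤ i.choose m ^ 2 * i.factorial := by
              rcases Nat.eq_zero_or_pos (i.choose m) with h | h
              · simp [h]
              · exact Nat.mul_le_mul_right _ (by nlinarith)
      have hreal : ((A : ℝ) * Real.sqrt m.factorial) ^ 2
          ≤ ((i.choose m : ℝ) * Real.sqrt i.factorial) ^ 2 := by
        rw [mul_pow, mul_pow, Real.sq_sqrt (by positivity), Real.sq_sqrt (by positivity)]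
        have h2 : ((A ^ 2 * m.factorial : ℕ) : ℝ) ≤ ((i.choose m ^ 2 * i.factorial : ℕ) : ℝ) := by
          exact_mod_cast hnat
        push_cast at h2
        linarith
      have h1 : (0 : ℝ) ≤ (i.choose m : ℝ) * Real.sqrt i.factorial := by positivity
      have h0 : (0 : ℝ) ≤ (A : ℝ) * Real.sqrt m.factorial := by positivity
      nlinarith [hreal, h1, h0]
    · rw [Polynomial.coeff_hermite_of_lt hmi, Nat.choose_eq_zero_of_lt hmi]
      simp
  · rw [Polynomial.coeff_hermite_of_odd_add ho]
    simp only [Int.cast_zero, abs_zero, zero_mul]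
    positivity

private lemma coeff_hermiteNorm_le (i m : ℕ) :
    |(hermiteNorm i).coeff m| ≤ (i.choose m : ℝ) / Real.sqrt m.factorial := by
  have hm : (0 : ℝ) < Real.sqrt m.factorial := by
    apply Real.sqrt_pos.2; exact_mod_cast Nat.factorial_pos m
  have hi : (0 : ℝ) < Real.sqrt i.factorial := by
    apply Real.sqrt_pos.2; exact_mod_cast Nat.factorial_pos i
  have hkey := key i m
  rw [hermiteNorm, Polynomial.coeff_smul, smul_eq_mul, abs_mul,
    abs_of_nonneg (by positivity : (0:ℝ) ≤ (Real.sqrt i.factorial)⁻¹),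
    Polynomial.coeff_map]
  simp only [eq_intCast]
  rw [inv_mul_le_iff₀ hi, mul_div_assoc', le_div_iff₀ hm]
  linarith [hkey]

/-- if `p_d = Σ_{m=0}^d ĉ_m h_m` with `|ĉ_m| ≤ M`, then the coefficients
`a_m` of `p_d` in the monomial basis satisfy `|a_m| ≤ M · (2/√(m!)) · 2^d`. -/
theorem stmt11 (d : ℕ) (M : ℝ) (c : ℕ → ℝ) (hc : ∀ m ≤ d, |c m| ≤ M) :
    ∀ m ≤ d,
      |(∑ i ∈ Finset.range (d + 1), c i • hermiteNorm i).coeff m|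
        ≤ M * (2 / Real.sqrt m.factorial) * 2 ^ d := by
  intro m hm
  have hM : 0 ≤ M := le_trans (abs_nonneg _) (hc 0 (Nat.zero_le d))
  have hsm : (0 : ℝ) < Real.sqrt m.factorial := by
    apply Real.sqrt_pos.2; exact_mod_cast Nat.factorial_pos m
  rw [Polynomial.finset_sum_coeff]
  have hsum : ∑ i ∈ Finset.range (d + 1), i.choose m ≤ 2 ^ (d + 1) := by
    have hsub : Finset.Icc m d ⊆ Finset.range (d + 1) := fun x hx => by
      simp only [Finset.mem_Icc] at hx; exact Finset.mem_range.2 (by omega)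
    have h1 : ∑ i ∈ Finset.range (d + 1), i.choose m = ∑ i ∈ Finset.Icc m d, i.choose m := by
      refine (Finset.sum_subset hsub fun x hx hnx => ?_).symm
      simp only [Finset.mem_range] at hx
      simp only [Finset.mem_Icc] at hnx
      exact Nat.choose_eq_zero_of_lt (by omega)
    rw [h1, Nat.sum_Icc_choose]
    calc (d + 1).choose (m + 1) ≤ ∑ k ∈ Finset.range (d + 2), (d + 1).choose k :=
          Finset.single_le_sum (fun k _ => Nat.zero_le _)
            (Finset.mem_range.2 (by omega))
      _ = 2 ^ (d + 1) := Nat.sum_range_choose (d + 1)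
  have hsumR : ((∑ i ∈ Finset.range (d + 1), i.choose m : ℕ) : ℝ) ≤ 2 * 2 ^ d := by
    calc ((∑ i ∈ Finset.range (d + 1), i.choose m : ℕ) : ℝ)
        ≤ ((2 ^ (d + 1) : ℕ) : ℝ) := by exact_mod_cast hsum
      _ = 2 * 2 ^ d := by push_cast [pow_succ]; ring
  calc |∑ i ∈ Finset.range (d + 1), (c i • hermiteNorm i).coeff m|
      ≤ ∑ i ∈ Finset.range (d + 1), |(c i • hermiteNorm i).coeff m| :=
        Finset.abs_sum_le_sum_abs _ _
    _ ≤ ∑ i ∈ Finset.range (d + 1), M * ((i.choose m : ℝ) / Real.sqrt m.factorial) := by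
        apply Finset.sum_le_sum
        intro i hi
        rw [Polynomial.coeff_smul, smul_eq_mul, abs_mul]
        exact mul_le_mul (hc i (Nat.lt_succ_iff.1 (Finset.mem_range.1 hi)))
          (coeff_hermiteNorm_le i m) (abs_nonneg _) hM
    _ = M * (((∑ i ∈ Finset.range (d + 1), i.choose m : ℕ) : ℝ) / Real.sqrt m.factorial) := by
        rw [← Finset.mul_sum, ← Finset.sum_div, Nat.cast_sum]
    _ ≤ M * ((2 * 2 ^ d) / Real.sqrt m.factorial) := by gcongr
    _ = M * (2 / Real.sqrt m.factorial) * 2 ^ d := by ring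
end
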